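/- Let G = G₀ *_H G₁ be a nondegenerate free product with amalgamation and assume H is finite. Then the following are equivalent: (i) G is icc; (ii) ker G = {e}; (iii) K₀ = K₁ = {e}; (iv) G is a Powers group; (v) there exists g ∈ G such that H ∩ gHg⁻¹ = {e}; (vi) G has the free semigroup property. -/

import Mathlib

variable {G : Type*} [Group G]

/-- `AltWord G₀ G₁ H j w`: the list `w` is an alternating word whose `i`-th letter lies in
`G_{(i+j) mod 2} \ H`. -/
def AltWord (G₀ G₁ H : Subgroup G) (j : ℕ) (w : List G) : Prop :=
  ∀ (i : ℕ) (hi : i < w.length),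
    w.get ⟨i, hi⟩ ∈ (if (i + j) % 2 = 0 then (G₀ : Set G) else (G₁ : Set G)) \ (H : Set G)

/-- `G` is the free product of its subgroups `G₀` and `G₁` amalgamated over their common
subgroup `H` (internal characterization: `G₀ ∩ G₁ = H`, the subgroups `G₀` and `G₁` generate
`G`, and no nonempty alternating word with letters in `G₀ \ H` and `G₁ \ H` has product
in `H`). -/
structure IsAmalgam (G₀ G₁ H : Subgroup G) : Prop where
  le_left : H ≤ G₀
  le_right : H ≤ G₁
  inf_eq : G₀ ⊓ G₁ = H
  closure_eq_top : Subgroup.closure ((G₀ : Set G) ∪ (G₁ : Set G)) = ⊤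
  reduced : ∀ (j : ℕ) (w : List G), w ≠ [] → AltWord G₀ G₁ H j w → w.prod ∉ H

/-- The amalgam `G₀ *_H G₁` is *nondegenerate*: `([G₀ : H] − 1) · ([G₁ : H] − 1) ≥ 2`,
i.e. `H` is a proper subgroup of both `G₀` and `G₁`, and has index at least `3` (possibly
infinite) in at least one of them. -/
def Nondegenerate (G₀ G₁ H : Subgroup G) : Prop :=
  H.relIndex G₀ ≠ 1 ∧ H.relIndex G₁ ≠ 1 ∧ ¬(H.relIndex G₀ = 2 ∧ H.relIndex G₁ = 2)

/-- `T_{j,k}`: the set of elements of `G` that are products of alternating words of length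
`k` whose first letter lies in `G_j \ H`; by convention `T_{j,0} = H`. -/
def TT (G₀ G₁ H : Subgroup G) (j k : ℕ) : Set G :=
  if k = 0 then (H : Set G)
  else {g | ∃ w : List G, w.length = k ∧ AltWord G₀ G₁ H j w ∧ w.prod = g}

/-- `C_{j,k} = ⋂_{g ∈ T_{j,k}} g H g⁻¹`. -/
def CC (G₀ G₁ H : Subgroup G) (j k : ℕ) : Set G :=
  ⋂ g ∈ TT G₀ G₁ H j k, {x | g⁻¹ * x * g ∈ H}

/-- `K_j = ⋂_{k ≥ 0} C_{j,k}`. -/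
def KK (G₀ G₁ H : Subgroup G) (j : ℕ) : Set G :=
  ⋂ k : ℕ, CC G₀ G₁ H j k

/-- The kernel of the amalgam, `ker G = ⋂_{g ∈ G} g H g⁻¹`, as a set. -/
def amalgamKerSet (H : Subgroup G) : Set G :=
  ⋂ g : G, {x | g⁻¹ * x * g ∈ H}

/-- A group `G` is a *Powers group* if for every finite subset `F` of `G \ {e}` and every
integer `k ≥ 1` there exist a partition `G = D ⊔ E` and elements `g 1, …, g k ∈ G` such that
`f D ∩ D = ∅` for all `f ∈ F` and `g i E ∩ g j E = ∅` for all distinct `1 ≤ i, j ≤ k`. -/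
def IsPowersGroup (G : Type*) [Group G] : Prop :=
  ∀ F : Finset G, (1 : G) ∉ F → ∀ k : ℕ, 1 ≤ k →
    ∃ (D E : Set G) (g : ℕ → G),
      D ∪ E = Set.univ ∧ D ∩ E = ∅ ∧
      (∀ f ∈ F, ((fun x => f * x) '' D) ∩ D = ∅) ∧
      (∀ i j, 1 ≤ i → i ≤ k → 1 ≤ j → j ≤ k → i ≠ j →
        ((fun x => g i * x) '' E) ∩ ((fun x => g j * x) '' E) = ∅)

/-- A group `G` has the *free semigroup property* if for every finite subset `F` of `G`
there exists `g ∈ G` such that `g F` is semifree: distinct nonempty formal words in the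
elements of `g F` define distinct elements of `G`. -/
def HasFreeSemigroupProperty (G : Type*) [Group G] : Prop :=
  ∀ F : Finset G, ∃ g : G,
    ∀ w₁ w₂ : List G, w₁ ≠ [] → w₂ ≠ [] →
      (∀ x ∈ w₁, x ∈ (fun f => g * f) '' (F : Set G)) →
      (∀ x ∈ w₂, x ∈ (fun f => g * f) '' (F : Set G)) →
      w₁.prod = w₂.prod → w₁ = w₂

/-- A group `G` is *icc* if every conjugacy class of `G` other than `{e}` is infinite. -/
def IsIcc (G : Type*) [Group G] : Prop :=
  ∀ g : G, g ≠ 1 → {x : G | ∃ y : G, y * g * y⁻¹ = x}.Infinite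

namespace AmalgamAux

open List

/-- the `j`-th side as a subgroup -/
def sdG (G₀ G₁ : Subgroup G) (j : ℕ) : Subgroup G := if j % 2 = 0 then G₀ else G₁

variable {G₀ G₁ H : Subgroup G}

theorem sdG_congr (h : j % 2 = j' % 2) : sdG G₀ G₁ j = sdG G₀ G₁ j' := by
  unfold sdG; rw [h]

theorem H_le_sdG (ha : IsAmalgam G₀ G₁ H) (j : ℕ) : H ≤ sdG G₀ G₁ j := by
  unfold sdG; split
  · exact ha.le_left
  · exact ha.le_right

theorem mem_H_of_mem_sdG (ha : IsAmalgam G₀ G₁ H) {j j' : ℕ} (hj : ¬ j % 2 = j' % 2)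
    {x : G} (hx : x ∈ sdG G₀ G₁ j) (hx' : x ∈ sdG G₀ G₁ j') : x ∈ H := by
  have h0 : ∀ y : G, y ∈ G₀ → y ∈ G₁ → y ∈ H := by
    intro y h1 h2
    rw [← ha.inf_eq]; exact ⟨h1, h2⟩
  unfold sdG at hx hx'
  rcases Nat.mod_two_eq_zero_or_one j with h | h <;>
    rcases Nat.mod_two_eq_zero_or_one j' with h' | h' <;>
      simp [h, h'] at hx hx' hj ⊢ <;>
      first
        | exact h0 x hx hx'
        | exact h0 x hx' hx

/-- recursive form of alternating words -/
def AW (G₀ G₁ H : Subgroup G) : ℕ → List G → Prop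
  | _, [] => True
  | j, a :: w => (a ∈ sdG G₀ G₁ j ∧ a ∉ H) ∧ AW G₀ G₁ H (j + 1) w

theorem aw_iff : ∀ {j : ℕ} (w : List G), AltWord G₀ G₁ H j w ↔ AW G₀ G₁ H j w := by
  intro j w
  induction w generalizing j with
  | nil =>
    simp only [AW, iff_true]
    intro i hi; simp at hi
  | cons a t ih =>
    constructor
    · intro h
      refine ⟨?_, ?_⟩
      · have h0 := h 0 (by simp)
        simp only [List.get] at h0
        have : (0 + j) % 2 = j % 2 := by omega
        constructor
        · rcases Nat.mod_two_eq_zero_or_one j with hj | hj <;>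
            simp [sdG, hj, this, Set.mem_diff] at h0 ⊢ <;> tauto
        · exact h0.2
      · rw [← ih]
        intro i hi
        have h1 := h (i + 1) (by simpa using Nat.succ_lt_succ hi)
        simp only [List.get] at h1
        have : i + 1 + j = i + (j + 1) := by omega
        rw [this] at h1
        exact h1
    · rintro ⟨⟨ha1, ha2⟩, ht⟩ i hi
      match i, hi with
      | 0, _ =>
        simp only [List.get]
        have : (0 + j) % 2 = j % 2 := by omega
        rcases Nat.mod_two_eq_zero_or_one j with hj | hj <;>
          simp [sdG, hj, this] at ha1 ⊢ <;> exact ⟨ha1, ha2⟩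
      | (i+1), hi =>
        simp only [List.get]
        have h1 := (ih.mpr ht) i (by simpa using Nat.lt_of_succ_lt_succ hi)
        have : i + 1 + j = i + (j + 1) := by omega
        rw [this]
        exact h1

namespace AW

theorem nil {j : ℕ} : AW G₀ G₁ H j ([] : List G) := trivial

theorem congr' : ∀ {w : List G} {j j' : ℕ}, j % 2 = j' % 2 →
    AW G₀ G₁ H j w → AW G₀ G₁ H j' w := by
  intro w
  induction w with
  | nil => intros; trivial
  | cons a t ih =>
    intro j j' h hw
    exact ⟨⟨(sdG_congr (G₀ := G₀) (G₁ := G₁) h) ▸ hw.1.1, hw.1.2⟩, ih (by omega) hw.2⟩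

theorem index_eq {j j' : ℕ} (h : j = j') {w : List G} (hw : AW G₀ G₁ H j w) :
    AW G₀ G₁ H j' w := h ▸ hw

theorem append : ∀ {u : List G} {j : ℕ} {v : List G}, AW G₀ G₁ H j u →
    AW G₀ G₁ H (u.length + j) v → AW G₀ G₁ H j (u ++ v) := by
  intro u
  induction u with
  | nil => intro j v _ hv; simpa using hv
  | cons a t ih =>
    intro j v hu hv
    refine ⟨hu.1, ih hu.2 ?_⟩
    have e : (a :: t).length + j = t.length + (j + 1) := by
      simp only [List.length_cons]; omega
    exact index_eq e hv

end AW



def revInv (w : List G) : List G := (w.map fun x => x⁻¹).reverse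

@[simp] theorem revInv_nil : revInv ([] : List G) = [] := rfl

theorem revInv_cons (a : G) (w : List G) : revInv (a :: w) = revInv w ++ [a⁻¹] := by
  simp [revInv]

@[simp] theorem revInv_length (w : List G) : (revInv w).length = w.length := by simp [revInv]

theorem revInv_prod (w : List G) : (revInv w).prod = w.prod⁻¹ :=
  (List.prod_inv_reverse w).symm

theorem AW.single {j : ℕ} {x : G} (h1 : x ∈ sdG G₀ G₁ j) (h2 : x ∉ H) :
    AW G₀ G₁ H j [x] := ⟨⟨h1, h2⟩, trivial⟩

theorem notin_H_inv {x : G} (h : x ∉ H) : x⁻¹ ∉ H := fun hc => h (by simpa using inv_mem hc)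

theorem AW.revInv : ∀ {w : List G} {j : ℕ}, AW G₀ G₁ H j w →
    AW G₀ G₁ H (w.length + j + 1) (AmalgamAux.revInv w) := by
  intro w
  induction w with
  | nil => intro j _; trivial
  | cons a t ih =>
    intro j hw
    rw [revInv_cons]
    have h1 : AW G₀ G₁ H ((a :: t).length + j + 1) (AmalgamAux.revInv t) := by
      refine AW.index_eq ?_ (ih hw.2)
      simp only [List.length_cons]; omega
    refine h1.append ?_
    refine AW.single ?_ (notin_H_inv hw.1.2)
    have : (AmalgamAux.revInv t).length + ((a :: t).length + j + 1) = 2 * t.length + j + 2 := by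
      simp only [revInv_length, List.length_cons]; omega
    rw [this, sdG_congr (j' := j) (by omega)]
    exact inv_mem hw.1.1

theorem prod_notin (ha : IsAmalgam G₀ G₁ H) {j : ℕ} {w : List G} (hw : AW G₀ G₁ H j w)
    (hne : w ≠ []) : w.prod ∉ H := ha.reduced j w hne ((aw_iff w).mpr hw)

/-- The fundamental comparison lemma: two alternating words whose products agree up to `H`
have the same length and `H`-related prefixes. -/
theorem key (ha : IsAmalgam G₀ G₁ H) :
    ∀ (u : List G) {j j' : ℕ} (v : List G), AW G₀ G₁ H j u → AW G₀ G₁ H j' v →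
      (u.prod)⁻¹ * v.prod ∈ H →
      u.length = v.length ∧ ∀ m : ℕ, ((u.take m).prod)⁻¹ * (v.take m).prod ∈ H := by
  intro u
  induction u with
  | nil =>
    intro j j' v _ hv hmem
    have hv1 : v.prod ∈ H := by simpa using hmem
    have hvnil : v = [] := by
      by_contra hne
      exact prod_notin ha hv hne hv1
    subst hvnil
    exact ⟨rfl, fun m => by simpa using one_mem H⟩
  | cons a t ih =>
    intro j j' v hu hv hmem
    rcases v with _ | ⟨c, v'⟩
    · exfalso
      have h2 : (a :: t).prod ∈ H := by
        have h3 : ((a :: t).prod)⁻¹ ∈ H := by simpa using hmem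
        simpa using inv_mem h3
      exact prod_notin ha hu (by simp) h2
    · have hpar : j % 2 = j' % 2 := by
        by_contra hpar
        set W := AmalgamAux.revInv t ++ (a⁻¹ :: c :: v') with hWdef
        have hW : AW G₀ G₁ H (t.length + (j + 1) + 1) W := by
          refine AW.append hu.2.revInv ?_
          have hidx : (AmalgamAux.revInv t).length + (t.length + (j + 1) + 1)
              = 2 * t.length + j + 2 := by simp only [revInv_length]; omega
          rw [hidx]
          refine ⟨⟨?_, notin_H_inv hu.1.2⟩, ⟨⟨?_, hv.1.2⟩, ?_⟩⟩
          · rw [sdG_congr (j' := j) (by omega)]; exact inv_mem hu.1.1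
          · rw [sdG_congr (j' := j') (by omega)]; exact hv.1.1
          · exact hv.2.congr' (by omega)
        have hprod : W.prod = ((a :: t).prod)⁻¹ * ((c :: v').prod) := by
          simp [hWdef, revInv_prod, mul_assoc]
        have hne : W ≠ [] := by simp [hWdef]
        exact prod_notin ha hW hne (hprod ▸ hmem)
      have h₀ : a⁻¹ * c ∈ H := by
        by_contra h₀n
        set W := AmalgamAux.revInv t ++ ((a⁻¹ * c) :: v') with hWdef
        have hW : AW G₀ G₁ H (t.length + (j + 1) + 1) W := by
          refine AW.append hu.2.revInv ?_
          have hidx : (AmalgamAux.revInv t).length + (t.length + (j + 1) + 1)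
              = 2 * t.length + j + 2 := by simp only [revInv_length]; omega
          rw [hidx]
          refine ⟨⟨?_, h₀n⟩, ?_⟩
          · rw [sdG_congr (j' := j) (by omega)]
            exact mul_mem (inv_mem hu.1.1) ((sdG_congr (G₀ := G₀) (G₁ := G₁) (by omega : j' % 2 = j % 2)) ▸ hv.1.1)
          · exact hv.2.congr' (by omega)
        have hprod : W.prod = ((a :: t).prod)⁻¹ * ((c :: v').prod) := by
          simp [hWdef, revInv_prod, mul_assoc]
        have hne : W ≠ [] := by simp [hWdef]
        exact prod_notin ha hW hne (hprod ▸ hmem)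
      rcases v' with _ | ⟨c', t'⟩
      · have ht1 : (t.prod)⁻¹ ∈ H := by
          have h2 := mul_mem hmem (inv_mem h₀)
          have e : ((a :: t).prod)⁻¹ * ([c].prod) * (a⁻¹ * c)⁻¹ = (t.prod)⁻¹ := by
            simp [mul_assoc]
          rwa [e] at h2
        have htnil : t = [] := by
          by_contra hne
          exact prod_notin ha hu.2 hne (by simpa using inv_mem ht1)
        subst htnil
        refine ⟨rfl, fun m => ?_⟩
        match m with
        | 0 => simpa using one_mem H
        | (m + 1) => simpa [mul_assoc] using h₀
      · set v'' := (a⁻¹ * c * c') :: t' with hv''def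
        have hv'' : AW G₀ G₁ H (j + 1) v'' := by
          refine ⟨⟨?_, ?_⟩, hv.2.2.congr' (by omega)⟩
          · rw [sdG_congr (j' := j' + 1) (by omega)]
            exact mul_mem (H_le_sdG ha _ h₀) hv.2.1.1
          · intro hc
            refine hv.2.1.2 ?_
            have : (a⁻¹ * c)⁻¹ * (a⁻¹ * c * c') = c' := by group
            rw [← this]
            exact mul_mem (inv_mem h₀) hc
        have hmem' : (t.prod)⁻¹ * v''.prod ∈ H := by
          have e : (t.prod)⁻¹ * v''.prod = ((a :: t).prod)⁻¹ * ((c :: c' :: t').prod) := by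
            simp [hv''def, mul_assoc]
          rw [e]; exact hmem
        obtain ⟨hlen, htake⟩ := ih v'' hu.2 hv'' hmem'
        constructor
        · simp only [List.length_cons] at hlen ⊢
          simp [hv''def] at hlen
          omega
        · intro m
          match m with
          | 0 => simpa using one_mem H
          | 1 =>
            simpa [mul_assoc] using h₀
          | (m'' + 2) =>
            have h2 := htake (m'' + 1)
            simp only [hv''def, List.take_succ_cons, List.prod_cons, mul_inv_rev,
              mul_assoc] at h2 ⊢
            exact h2


theorem key_prod_eq (ha : IsAmalgam G₀ G₁ H) {j j' : ℕ} {u v : List G}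
    (hu : AW G₀ G₁ H j u) (hv : AW G₀ G₁ H j' v) (h : u.prod = v.prod) :
    u.length = v.length ∧ ∀ m : ℕ, ((u.take m).prod)⁻¹ * (v.take m).prod ∈ H :=
  key ha u v hu hv (by rw [h]; simpa using one_mem H)

theorem parity_eq (ha : IsAmalgam G₀ G₁ H) {j j' : ℕ} {u v : List G}
    (hu : AW G₀ G₁ H j u) (hv : AW G₀ G₁ H j' v) (hune : u ≠ [])
    (hmem : (u.prod)⁻¹ * v.prod ∈ H) : j % 2 = j' % 2 := by
  rcases u with _ | ⟨a, t⟩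
  · exact absurd rfl hune
  rcases v with _ | ⟨c, v'⟩
  · exfalso
    have h2 : ((a :: t).prod)⁻¹ ∈ H := by simpa using hmem
    exact prod_notin ha hu (by simp) (by simpa using inv_mem h2)
  have h1 := (key ha (a :: t) (c :: v') hu hv hmem).2 1
  have h2 : a⁻¹ * c ∈ H := by simpa [mul_assoc] using h1
  by_contra hpar
  have hc : c ∈ sdG G₀ G₁ j := by
    have : c = a * (a⁻¹ * c) := by group
    rw [this]
    exact mul_mem hu.1.1 (H_le_sdG ha j h2)
  exact hv.1.2 (mem_H_of_mem_sdG ha hpar hc hv.1.1)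

/-- normal form: every element is in `H` or a product of a nonempty alternating word -/
def NF (G₀ G₁ H : Subgroup G) (x : G) : Prop :=
  x ∈ H ∨ ∃ j w, w ≠ [] ∧ AW G₀ G₁ H j w ∧ w.prod = x

theorem nf_mul_letter (ha : IsAmalgam G₀ G₁ H) {p : ℕ} {y : G} (hy : y ∈ sdG G₀ G₁ p)
    {x : G} (hx : NF G₀ G₁ H x) : NF G₀ G₁ H (y * x) := by
  rcases hx with hx | ⟨j, w, hne, hw, hprod⟩
  · by_cases hyx : y * x ∈ H
    · exact Or.inl hyx
    · refine Or.inr ⟨p, [y * x], by simp, AW.single (mul_mem hy (H_le_sdG ha p hx)) hyx, by simp⟩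
  · rcases w with _ | ⟨a, t⟩
    · exact absurd rfl hne
    subst hprod
    by_cases hyH : y ∈ H
    · refine Or.inr ⟨j, (y * a) :: t, by simp, ⟨⟨?_, ?_⟩, hw.2⟩, by simp [mul_assoc]⟩
      · exact mul_mem (H_le_sdG ha j hyH) hw.1.1
      · intro hc
        exact hw.1.2 (by simpa using mul_mem (inv_mem hyH) hc)
    · by_cases hpj : p % 2 = j % 2
      · by_cases hzH : y * a ∈ H
        · rcases t with _ | ⟨b, t'⟩
          · exact Or.inl (by simpa using hzH)
          · refine Or.inr ⟨j + 1, (y * a * b) :: t', by simp, ⟨⟨?_, ?_⟩, hw.2.2⟩,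
              by simp [mul_assoc]⟩
            · exact mul_mem (H_le_sdG ha (j+1) hzH) hw.2.1.1
            · intro hc
              exact hw.2.1.2 (by simpa [mul_assoc] using mul_mem (inv_mem hzH) hc)
        · refine Or.inr ⟨j, (y * a) :: t, by simp, ⟨⟨?_, hzH⟩, hw.2⟩, by simp [mul_assoc]⟩
          exact mul_mem ((sdG_congr (G₀ := G₀) (G₁ := G₁) hpj) ▸ hy) hw.1.1
      · refine Or.inr ⟨p, y :: a :: t, by simp, ⟨⟨hy, hyH⟩, ?_⟩, by simp [mul_assoc]⟩
        exact AW.congr' (by omega) (⟨hw.1, hw.2⟩ : AW G₀ G₁ H j (a :: t))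

theorem nf_all (ha : IsAmalgam G₀ G₁ H) (x : G) : NF G₀ G₁ H x := by
  have hx : x ∈ Subgroup.closure ((G₀ : Set G) ∪ (G₁ : Set G)) := by
    rw [ha.closure_eq_top]; trivial
  have hx2 : x ∈ Submonoid.closure ((G₀ : Set G) ∪ (G₁ : Set G)) := by
    have h1 := Subgroup.closure_toSubmonoid ((G₀ : Set G) ∪ (G₁ : Set G))
    have hx1 : x ∈ (Subgroup.closure ((G₀ : Set G) ∪ (G₁ : Set G))).toSubmonoid := hx
    rw [h1] at hx1
    have hle : Submonoid.closure (((G₀ : Set G) ∪ (G₁ : Set G)) ∪ ((G₀ : Set G) ∪ (G₁ : Set G))⁻¹)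
        ≤ Submonoid.closure ((G₀ : Set G) ∪ (G₁ : Set G)) := by
      refine Submonoid.closure_le.mpr ?_
      rintro z (hz | hz)
      · exact Submonoid.subset_closure hz
      · have hz' : z⁻¹ ∈ ((G₀ : Set G) ∪ (G₁ : Set G)) := Set.mem_inv.mp hz
        rcases hz' with h | h
        · have h2 : z⁻¹ ∈ G₀ := h
          exact Submonoid.subset_closure (Or.inl (show z ∈ (G₀ : Set G) by
            simpa using inv_mem h2))
        · have h2 : z⁻¹ ∈ G₁ := h
          exact Submonoid.subset_closure (Or.inr (show z ∈ (G₁ : Set G) by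
            simpa using inv_mem h2))
    exact hle hx1
  obtain ⟨l, hl, hprod⟩ := Submonoid.exists_list_of_mem_closure hx2
  subst hprod
  clear hx hx2
  induction l with
  | nil => exact Or.inl (by simpa using one_mem H)
  | cons y l ih =>
    have h2 := ih (fun z hz => hl z (by simp [hz]))
    rw [List.prod_cons]
    rcases hl y (by simp) with h | h
    · exact nf_mul_letter ha (p := 0) (by simpa [sdG] using h) h2
    · exact nf_mul_letter ha (p := 1) (by simpa [sdG] using h) h2

/-- prefix lemma : if `x ∈ H` is conjugated into `H` by a word, then every prefix also
conjugates it into `H`. -/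
theorem prefix_conj (ha : IsAmalgam G₀ G₁ H) :
    ∀ (u : List G) {j : ℕ} (v : List G) {x : G}, x ∈ H →
    AW G₀ G₁ H j u → AW G₀ G₁ H (u.length + j) v →
    ((u ++ v).prod)⁻¹ * x * (u ++ v).prod ∈ H → (u.prod)⁻¹ * x * u.prod ∈ H := by
  intro u
  induction u with
  | nil => intro j v x hx _ _ _; simpa using hx
  | cons a t ihh =>
    intro j v x hx hu hv hconj
    by_cases hx1H : a⁻¹ * x * a ∈ H
    · have hv' : AW G₀ G₁ H (t.length + (j + 1)) v :=
        hv.index_eq (by simp only [List.length_cons]; omega)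
      have hc' : ((t ++ v).prod)⁻¹ * (a⁻¹ * x * a) * (t ++ v).prod ∈ H := by
        have e : ((t ++ v).prod)⁻¹ * (a⁻¹ * x * a) * (t ++ v).prod
            = (((a :: t) ++ v).prod)⁻¹ * x * ((a :: t) ++ v).prod := by
          simp [mul_assoc]
        rw [e]; exact hconj
      have h3 := ihh v hx1H hu.2 hv' hc'
      have e2 : ((a :: t).prod)⁻¹ * x * (a :: t).prod
          = (t.prod)⁻¹ * (a⁻¹ * x * a) * t.prod := by simp [mul_assoc]
      rw [e2]; exact h3
    · exfalso
      have hx1s : a⁻¹ * x * a ∈ sdG G₀ G₁ j :=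
        mul_mem (mul_mem (inv_mem hu.1.1) (H_le_sdG ha j hx)) hu.1.1
      have htv : AW G₀ G₁ H (j + 1) (t ++ v) :=
        hu.2.append (hv.index_eq (by simp only [List.length_cons]; omega))
      set W := AmalgamAux.revInv (t ++ v) ++ ((a⁻¹ * x * a) :: (t ++ v)) with hWdef
      have hW : AW G₀ G₁ H ((t ++ v).length + (j + 1) + 1) W := by
        refine AW.append htv.revInv ?_
        have hidx : (AmalgamAux.revInv (t ++ v)).length + ((t ++ v).length + (j + 1) + 1)
            = 2 * (t ++ v).length + j + 2 := by simp only [revInv_length]; omega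
        rw [hidx]
        refine ⟨⟨?_, hx1H⟩, ?_⟩
        · rw [sdG_congr (j' := j) (by omega)]; exact hx1s
        · exact htv.congr' (by omega)
      have hprodW : W.prod = (((a :: t) ++ v).prod)⁻¹ * x * ((a :: t) ++ v).prod := by
        simp [hWdef, revInv_prod, mul_assoc]
      have hne : W ≠ [] := by simp [hWdef]
      exact prod_notin ha hW hne (hprodW ▸ hconj)

/-- conjugating an element of `H` through an alternating word: either it stays in `H` or
it escapes at some level, producing an explicit alternating normal form. -/
theorem casc (ha : IsAmalgam G₀ G₁ H) :
    ∀ (v : List G) {j : ℕ} {x : G}, x ∈ H → AW G₀ G₁ H j v →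
    ((v.prod)⁻¹ * x * v.prod ∈ H) ∨
    ∃ i, i < v.length ∧ ∃ m : G, (m ∈ sdG G₀ G₁ (i + j) ∧ m ∉ H) ∧
      (v.prod)⁻¹ * x * v.prod
        = ((AmalgamAux.revInv (v.drop (i+1))).prod) * m * ((v.drop (i+1)).prod) := by
  intro v
  induction v with
  | nil => intro j x hx _; exact Or.inl (by simpa using hx)
  | cons c v' ih =>
    intro j x hx hv
    by_cases hx1 : c⁻¹ * x * c ∈ H
    · have e : ∀ z : G, (v'.prod)⁻¹ * z * v'.prod
          = ((c :: v').prod)⁻¹ * (c * z * c⁻¹) * (c :: v').prod := by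
        intro z; simp [mul_assoc]
      have e2 : ((c :: v').prod)⁻¹ * x * (c :: v').prod
          = (v'.prod)⁻¹ * (c⁻¹ * x * c) * v'.prod := by
        simp [mul_assoc]
      rcases ih hx1 hv.2 with h | ⟨i, hi, m, hm, heq⟩
      · exact Or.inl (by rw [e2]; exact h)
      · refine Or.inr ⟨i + 1, by simpa using Nat.succ_lt_succ hi, m, ⟨?_, hm.2⟩, ?_⟩
        · have : i + 1 + j = i + (j + 1) := by omega
          rw [this]; exact hm.1
        · rw [e2, List.drop_succ_cons]
          exact heq
    · refine Or.inr ⟨0, by simp, c⁻¹ * x * c, ⟨?_, hx1⟩, ?_⟩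
      · have : (0 : ℕ) + j = j := by omega
        rw [this]
        exact mul_mem (mul_mem (inv_mem hv.1.1) (H_le_sdG ha j hx)) hv.1.1
      · simp [revInv_prod, mul_assoc]


/-! ### kernel set basics -/

theorem ker_one : (1 : G) ∈ amalgamKerSet H :=
  Set.mem_iInter.mpr fun g => by simpa using one_mem H

theorem ker_sub_H : amalgamKerSet H ⊆ (H : Set G) := by
  intro x hx
  have := Set.mem_iInter.mp hx 1
  simpa using this

theorem ker_mul {x y : G} (hx : x ∈ amalgamKerSet H) (hy : y ∈ amalgamKerSet H) :
    x * y ∈ amalgamKerSet H := by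
  refine Set.mem_iInter.mpr fun g => ?_
  have h1 := Set.mem_iInter.mp hx g
  have h2 := Set.mem_iInter.mp hy g
  have e : g⁻¹ * (x * y) * g = (g⁻¹ * x * g) * (g⁻¹ * y * g) := by group
  show g⁻¹ * (x * y) * g ∈ H
  rw [e]; exact mul_mem h1 h2

theorem ker_conj {x : G} (hx : x ∈ amalgamKerSet H) (y : G) :
    y⁻¹ * x * y ∈ amalgamKerSet H := by
  refine Set.mem_iInter.mpr fun g => ?_
  have h1 := Set.mem_iInter.mp hx (y * g)
  have e : (y * g)⁻¹ * x * (y * g) = g⁻¹ * (y⁻¹ * x * y) * g := by group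
  show g⁻¹ * (y⁻¹ * x * y) * g ∈ H
  rw [← e]; exact h1

/-! ### (i) → (ii) -/

theorem icc_to_ker (hfin : (H : Set G).Finite) (hicc : IsIcc G) :
    amalgamKerSet H = {1} := by
  ext x
  simp only [Set.mem_singleton_iff]
  constructor
  · intro hx
    by_contra hne
    have hclass : {z : G | ∃ y : G, y * x * y⁻¹ = z} ⊆ (H : Set G) := by
      rintro z ⟨y, rfl⟩
      have h1 := Set.mem_iInter.mp hx y⁻¹
      simpa [mul_assoc] using h1
    exact hicc x hne (hfin.subset hclass)
  · rintro rfl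
    exact ker_one

/-! ### (vi) → (ii) -/

theorem fsg_to_ker (hfin : (H : Set G).Finite) (hfsg : HasFreeSemigroupProperty G) :
    amalgamKerSet H = {1} := by
  classical
  ext x
  simp only [Set.mem_singleton_iff]
  constructor
  swap
  · rintro rfl; exact ker_one
  intro hx
  by_contra hne
  have hKfin : (amalgamKerSet H).Finite := hfin.subset ker_sub_H
  obtain ⟨g, hg⟩ := hfsg {1, x}
  set L := hKfin.toFinset.card + 1 with hL
  set ℓ : Bool → G := fun b => g * (if b then x else 1) with hℓ
  have hword : ∀ s : List Bool, ∃ c ∈ amalgamKerSet H, (s.map ℓ).prod = g ^ s.length * c := by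
    intro s
    induction s with
    | nil => exact ⟨1, ker_one, by simp⟩
    | cons b s ih =>
      obtain ⟨c, hc, he⟩ := ih
      refine ⟨((g ^ s.length)⁻¹ * (if b then x else 1) * g ^ s.length) * c, ?_, ?_⟩
      · refine ker_mul (ker_conj ?_ (g ^ s.length)) hc
        cases b
        · simpa using ker_one
        · simpa using hx
      · rw [List.map_cons, List.prod_cons, he, List.length_cons, hℓ]
        rw [pow_succ']
        group
  set Φ : (Fin L → Bool) → G := fun f => ((List.ofFn f).map ℓ).prod with hΦ
  have hmaps : ∀ f ∈ (Finset.univ : Finset (Fin L → Bool)),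
      Φ f ∈ hKfin.toFinset.image (fun c => g ^ L * c) := by
    intro f _
    obtain ⟨c, hc, he⟩ := hword (List.ofFn f)
    rw [Finset.mem_image]
    exact ⟨c, hKfin.mem_toFinset.mpr hc, by rw [hΦ]; simp only []; rw [he]; simp [hL]⟩
  have hlt : (hKfin.toFinset.image (fun c => g ^ L * c)).card
      < (Finset.univ : Finset (Fin L → Bool)).card := by
    have h1 : (hKfin.toFinset.image (fun c => g ^ L * c)).card ≤ hKfin.toFinset.card :=
      Finset.card_image_le
    have h2 : (Finset.univ : Finset (Fin L → Bool)).card = 2 ^ L := by simp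
    have h3 : hKfin.toFinset.card < 2 ^ L := by
      calc hKfin.toFinset.card < L := by omega
        _ < 2 ^ L := Nat.lt_two_pow_self
    omega
  obtain ⟨f₁, _, f₂, _, hne12, heq⟩ :=
    Finset.exists_ne_map_eq_of_card_lt_of_maps_to hlt hmaps
  apply hne12
  have hmem : ∀ (f : Fin L → Bool), ∀ z ∈ (List.ofFn f).map ℓ,
      z ∈ (fun f => g * f) '' (({1, x} : Finset G) : Set G) := by
    intro f z hz
    rw [List.mem_map] at hz
    obtain ⟨b, _, rfl⟩ := hz
    refine ⟨if b then x else 1, ?_, rfl⟩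
    cases b <;> simp [Finset.mem_coe, Finset.mem_insert, Finset.mem_singleton]
  have hlen : ∀ (f : Fin L → Bool), (List.ofFn f).map ℓ ≠ [] := by
    intro f h
    have : ((List.ofFn f).map ℓ).length = L := by simp [hL]
    rw [h] at this
    simp [hL] at this
  have heq2 := hg ((List.ofFn f₁).map ℓ) ((List.ofFn f₂).map ℓ) (hlen f₁) (hlen f₂)
    (hmem f₁) (hmem f₂) heq
  have hinj : Function.Injective ℓ := by
    intro b b' hbb
    have h2 : (if b = true then x else 1) = (if b' = true then x else 1) := mul_left_cancel hbb
    cases b <;> cases b' <;> simp at h2 <;>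
      first | rfl | exact absurd h2 hne | exact absurd h2.symm hne
  exact List.ofFn_injective (List.map_injective_iff.mpr hinj heq2)

/-! ### (iv) → (i) -/

theorem powers_to_icc (hp : IsPowersGroup G) : IsIcc G := by
  classical
  intro x hx
  intro hCfin
  set C := {z : G | ∃ y : G, y * x * y⁻¹ = z} with hC
  set S := insert (1 : G) C with hS
  have hSfin : S.Finite := hCfin.insert 1
  have hxC : x ∈ C := ⟨1, by simp⟩
  have hxS : x ∈ S := Set.mem_insert_of_mem _ hxC
  have h1S : (1 : G) ∈ S := Set.mem_insert _ _
  have hSconj : ∀ u : G, ∀ c ∈ S, u * c * u⁻¹ ∈ S := by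
    rintro u c (rfl | ⟨y, rfl⟩)
    · simp [hS]
    · exact Set.mem_insert_of_mem _ ⟨u * y, by group⟩
  set F := ((hSfin.toFinset ×ˢ hSfin.toFinset).image (fun p => p.1 * p.2⁻¹)).erase 1 with hF
  have h1F : (1 : G) ∉ F := Finset.notMem_erase _ _
  obtain ⟨D, E, gg, hDE, hDEdisj, hfD, hgE⟩ := hp F h1F 3 (by norm_num)
  set W : G → Set G := fun q => (fun c => c * q) '' S with hW
  have hWfin : ∀ q, (W q).Finite := fun q => hSfin.image _
  have hWcard : ∀ q, (W q).ncard = S.ncard := fun q =>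
    Set.ncard_image_of_injective _ (mul_left_injective q)
  have hD1 : ∀ q, (D ∩ W q).ncard ≤ 1 := by
    intro q
    rw [Set.ncard_le_one ((hWfin q).inter_of_right _)]
    rintro a ⟨haD, c₁, hc₁, rfl⟩ b ⟨hbD, c₂, hc₂, rfl⟩
    by_contra hab
    have hc12 : c₁ ≠ c₂ := fun h => hab (by rw [h])
    have hfF : c₁ * c₂⁻¹ ∈ F := by
      refine Finset.mem_erase.mpr ⟨?_, ?_⟩
      · intro h1
        exact hc12 (by
          have : c₁ * c₂⁻¹ * c₂ = 1 * c₂ := by rw [h1]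
          simpa [mul_assoc] using this)
      · rw [Finset.mem_image]
        exact ⟨(c₁, c₂), Finset.mem_product.mpr
          ⟨hSfin.mem_toFinset.mpr hc₁, hSfin.mem_toFinset.mpr hc₂⟩, rfl⟩
    have hempty := hfD (c₁ * c₂⁻¹) hfF
    have : c₁ * q ∈ ((fun z => (c₁ * c₂⁻¹) * z) '' D) ∩ D := by
      refine ⟨⟨c₂ * q, hbD, by group⟩, haD⟩
    rw [hempty] at this
    exact this
  have hE2 : ∀ q, S.ncard ≤ (E ∩ W q).ncard + 1 := by
    intro q
    have hsub : W q ⊆ (D ∩ W q) ∪ (E ∩ W q) := by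
      intro z hz
      have hzDE : z ∈ D ∪ E := by rw [hDE]; trivial
      rcases hzDE with h | h
      · exact Or.inl ⟨h, hz⟩
      · exact Or.inr ⟨h, hz⟩
    have h1 : (W q).ncard ≤ ((D ∩ W q) ∪ (E ∩ W q)).ncard :=
      Set.ncard_le_ncard hsub (((hWfin q).inter_of_right _).union ((hWfin q).inter_of_right _))
    have h2 := Set.ncard_union_le (D ∩ W q) (E ∩ W q)
    have h3 := hD1 q
    have h4 := hWcard q
    omega
  have hA : ∀ i : ℕ, S.ncard ≤ (((fun z => gg i * z) '' E) ∩ W 1).ncard + 1 := by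
    intro i
    have himg : (fun z => gg i * z) '' (E ∩ W (gg i)⁻¹) ⊆ ((fun z => gg i * z) '' E) ∩ W 1 := by
      rintro _ ⟨z, ⟨hzE, c, hcS, rfl⟩, rfl⟩
      refine ⟨⟨c * (gg i)⁻¹, hzE, rfl⟩, ?_⟩
      exact ⟨gg i * c * (gg i)⁻¹, hSconj _ c hcS, by group⟩
    have h1 : (E ∩ W (gg i)⁻¹).ncard
        = ((fun z => gg i * z) '' (E ∩ W (gg i)⁻¹)).ncard :=
      (Set.ncard_image_of_injective _ (mul_right_injective _)).symm
    have h2 : ((fun z => gg i * z) '' (E ∩ W (gg i)⁻¹)).ncard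
        ≤ (((fun z => gg i * z) '' E) ∩ W 1).ncard :=
      Set.ncard_le_ncard himg ((hWfin 1).inter_of_right _)
    have h3 := hE2 ((gg i)⁻¹)
    omega
  -- three pairwise disjoint subsets of W 1
  set A : ℕ → Set G := fun i => ((fun z => gg i * z) '' E) ∩ W 1 with hAdef
  have hdisj : ∀ i j, 1 ≤ i → i ≤ 3 → 1 ≤ j → j ≤ 3 → i ≠ j → Disjoint (A i) (A j) := by
    intro i j h1 h2 h3 h4 h5
    rw [Set.disjoint_iff_inter_eq_empty]
    have := hgE i j h1 h2 h3 h4 h5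
    rw [hAdef]
    simp only []
    rw [Set.inter_inter_inter_comm]
    rw [this]
    simp
  have hsum : (A 1).ncard + (A 2).ncard + (A 3).ncard ≤ (W 1).ncard := by
    have hAfin : ∀ i, (A i).Finite := fun i => (hWfin 1).inter_of_right _
    have hu12 : ((A 1) ∪ (A 2)).ncard = (A 1).ncard + (A 2).ncard :=
      Set.ncard_union_eq (hdisj 1 2 (by norm_num) (by norm_num) (by norm_num) (by norm_num)
        (by norm_num)) (hAfin 1) (hAfin 2)
    have hd3 : Disjoint ((A 1) ∪ (A 2)) (A 3) := by
      refine Set.disjoint_union_left.mpr ⟨?_, ?_⟩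
      · exact hdisj 1 3 (by norm_num) (by norm_num) (by norm_num) (by norm_num) (by norm_num)
      · exact hdisj 2 3 (by norm_num) (by norm_num) (by norm_num) (by norm_num) (by norm_num)
    have hu123 : ((A 1) ∪ (A 2) ∪ (A 3)).ncard = ((A 1) ∪ (A 2)).ncard + (A 3).ncard :=
      Set.ncard_union_eq hd3 ((hAfin 1).union (hAfin 2)) (hAfin 3)
    have hsub : (A 1) ∪ (A 2) ∪ (A 3) ⊆ W 1 := by
      intro z hz
      rcases hz with (hz | hz) | hz <;> exact hz.2
    have := Set.ncard_le_ncard hsub (hWfin 1)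
    omega
  have hS2 : 2 ≤ S.ncard := by
    rw [show (2 : ℕ) = 1 + 1 by rfl]
    refine Nat.succ_le_of_lt ?_
    rw [Set.one_lt_ncard hSfin]
    exact ⟨1, h1S, x, hxS, fun h => hx h.symm⟩
  have h1 : S.ncard ≤ (A 1).ncard + 1 := hA 1
  have h2 : S.ncard ≤ (A 2).ncard + 1 := hA 2
  have h3 : S.ncard ≤ (A 3).ncard + 1 := hA 3
  have h4 := hWcard 1
  omega

/-! ### word generation -/

theorem exists_word (ha : IsAmalgam G₀ G₁ H) (x : G) :
    ∃ l : List G, (∀ y ∈ l, y ∈ ((G₀ : Set G) ∪ (G₁ : Set G))) ∧ l.prod = x := by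
  have hx : x ∈ Subgroup.closure ((G₀ : Set G) ∪ (G₁ : Set G)) := by
    rw [ha.closure_eq_top]; trivial
  have hx2 : x ∈ Submonoid.closure ((G₀ : Set G) ∪ (G₁ : Set G)) := by
    have h1 := Subgroup.closure_toSubmonoid ((G₀ : Set G) ∪ (G₁ : Set G))
    have hx1 : x ∈ (Subgroup.closure ((G₀ : Set G) ∪ (G₁ : Set G))).toSubmonoid := hx
    rw [h1] at hx1
    have hle : Submonoid.closure (((G₀ : Set G) ∪ (G₁ : Set G)) ∪ ((G₀ : Set G) ∪ (G₁ : Set G))⁻¹)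
        ≤ Submonoid.closure ((G₀ : Set G) ∪ (G₁ : Set G)) := by
      refine Submonoid.closure_le.mpr ?_
      rintro z (hz | hz)
      · exact Submonoid.subset_closure hz
      · have hz' : z⁻¹ ∈ ((G₀ : Set G) ∪ (G₁ : Set G)) := Set.mem_inv.mp hz
        rcases hz' with h | h
        · have h2 : z⁻¹ ∈ G₀ := h
          exact Submonoid.subset_closure (Or.inl (show z ∈ (G₀ : Set G) by
            simpa using inv_mem h2))
        · have h2 : z⁻¹ ∈ G₁ := h
          exact Submonoid.subset_closure (Or.inr (show z ∈ (G₁ : Set G) by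
            simpa using inv_mem h2))
    exact hle hx1
  exact Submonoid.exists_list_of_mem_closure hx2

/-! ### KK basics -/

theorem mem_TT_word {j k : ℕ} (hk : k ≠ 0) {w : List G} (hw : AW G₀ G₁ H j w)
    (hlen : w.length = k) : w.prod ∈ TT G₀ G₁ H j k := by
  rw [TT, if_neg hk]
  exact ⟨w, hlen, (aw_iff w).mpr hw, rfl⟩

theorem mem_KK_iff {j : ℕ} {x : G} :
    x ∈ KK G₀ G₁ H j ↔ ∀ k : ℕ, ∀ g ∈ TT G₀ G₁ H j k, g⁻¹ * x * g ∈ H := by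
  constructor
  · intro h k g hg
    have h1 := Set.mem_iInter.mp h k
    have h2 := Set.mem_iInter.mp h1 g
    exact Set.mem_iInter.mp h2 hg
  · intro h
    exact Set.mem_iInter.mpr fun k =>
      Set.mem_iInter.mpr fun g => Set.mem_iInter.mpr fun hg => h k g hg

theorem one_mem_KK (j : ℕ) : (1 : G) ∈ KK G₀ G₁ H j :=
  mem_KK_iff.mpr fun _ g _ => by simpa using one_mem H

theorem KK_sub_H {j : ℕ} : KK G₀ G₁ H j ⊆ (H : Set G) := by
  intro x hx
  have h1 := mem_KK_iff.mp hx 0 1 (by rw [TT, if_pos rfl]; exact one_mem H)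
  simpa using h1

theorem TT_congr {j j' k : ℕ} (h : j % 2 = j' % 2) :
    TT G₀ G₁ H j k = TT G₀ G₁ H j' k := by
  rcases Nat.eq_zero_or_pos k with rfl | hk
  · simp [TT]
  · rw [TT, if_neg (by omega), TT, if_neg (by omega)]
    ext g
    constructor <;> rintro ⟨w, hlen, hw, rfl⟩
    · exact ⟨w, hlen, (aw_iff w).mpr (AW.congr' h ((aw_iff w).mp hw)), rfl⟩
    · exact ⟨w, hlen, (aw_iff w).mpr (AW.congr' h.symm ((aw_iff w).mp hw)), rfl⟩

theorem KK_congr {j j' : ℕ} (h : j % 2 = j' % 2) : KK G₀ G₁ H j = KK G₀ G₁ H j' := by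
  ext x
  rw [mem_KK_iff, mem_KK_iff]
  constructor <;> intro hh k g hg
  · exact hh k g ((TT_congr (G₀ := G₀) (G₁ := G₁) (H := H) (k := k) h) ▸ hg)
  · exact hh k g ((TT_congr (G₀ := G₀) (G₁ := G₁) (H := H) (k := k) h.symm) ▸ hg)

theorem conj_KK (ha : IsAmalgam G₀ G₁ H) {p : ℕ} {a : G} (haa : a ∈ sdG G₀ G₁ p)
    (hanH : a ∉ H) {x : G} (hx : x ∈ KK G₀ G₁ H p) :
    a⁻¹ * x * a ∈ KK G₀ G₁ H (p + 1) := by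
  rw [mem_KK_iff] at hx ⊢
  intro k g hg
  rcases Nat.eq_zero_or_pos k with rfl | hk
  · have hgH : g ∈ H := by rw [TT, if_pos rfl] at hg; exact hg
    have hword : AW G₀ G₁ H p [a * g] := by
      refine AW.single (mul_mem haa (H_le_sdG ha p hgH)) ?_
      intro hc
      exact hanH (by
        have : a * g * g⁻¹ ∈ H := mul_mem hc (inv_mem hgH)
        simpa [mul_assoc] using this)
    have h1 := hx 1 ((a * g)) (by
      have := mem_TT_word (j := p) one_ne_zero hword (by simp)
      simpa using this)
    have e : (a * g)⁻¹ * x * (a * g) = g⁻¹ * (a⁻¹ * x * a) * g := by group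
    rwa [e] at h1
  · rw [TT, if_neg (by omega)] at hg
    obtain ⟨w, hlen, hw, rfl⟩ := hg
    have hw' : AW G₀ G₁ H (p + 1) w := (aw_iff w).mp hw
    have hcons : AW G₀ G₁ H p (a :: w) := ⟨⟨haa, hanH⟩, hw'⟩
    have h1 := hx (k + 1) ((a :: w).prod) (mem_TT_word (by omega) hcons (by simp [hlen]))
    have e : ((a :: w).prod)⁻¹ * x * (a :: w).prod
        = (w.prod)⁻¹ * (a⁻¹ * x * a) * w.prod := by
      simp [mul_assoc]
    rwa [e] at h1

theorem hconj_KK (ha : IsAmalgam G₀ G₁ H) {p : ℕ} {h : G} (hH : h ∈ H) {x : G}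
    (hx : x ∈ KK G₀ G₁ H p) : h⁻¹ * x * h ∈ KK G₀ G₁ H p := by
  rw [mem_KK_iff] at hx ⊢
  intro k g hg
  rcases Nat.eq_zero_or_pos k with rfl | hk
  · have hgH : g ∈ H := by rw [TT, if_pos rfl] at hg; exact hg
    have h1 := hx 0 (h * g) (by rw [TT, if_pos rfl]; exact mul_mem hH hgH)
    have e : (h * g)⁻¹ * x * (h * g) = g⁻¹ * (h⁻¹ * x * h) * g := by group
    rwa [e] at h1
  · rw [TT, if_neg (by omega)] at hg
    obtain ⟨w, hlen, hw, rfl⟩ := hg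
    rcases w with _ | ⟨c, t⟩
    · simp at hlen; omega
    have hw' : AW G₀ G₁ H p (c :: t) := (aw_iff _).mp hw
    have hword : AW G₀ G₁ H p ((h * c) :: t) := by
      refine ⟨⟨mul_mem (H_le_sdG ha p hH) hw'.1.1, ?_⟩, hw'.2⟩
      intro hc
      exact hw'.1.2 (by
        have := mul_mem (inv_mem hH) hc
        simpa [mul_assoc] using this)
    have h1 := hx k (((h * c) :: t).prod) (mem_TT_word (by omega) hword (by simpa using hlen))
    have e : (((h * c) :: t).prod)⁻¹ * x * ((h * c) :: t).prod
        = ((c :: t).prod)⁻¹ * (h⁻¹ * x * h) * (c :: t).prod := by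
      simp [mul_assoc]
    rwa [e] at h1

theorem exists_notin_of_relIndex {K : Subgroup G} (h : H.relIndex K ≠ 1) :
    ∃ a, a ∈ K ∧ a ∉ H := by
  by_contra h2
  push_neg at h2
  exact h (Subgroup.relIndex_eq_one.mpr fun x hx => h2 x hx)

/-! ### (ii) → (iii) -/

theorem ker_to_KK (ha : IsAmalgam G₀ G₁ H) (hnd : Nondegenerate G₀ G₁ H)
    (hfin : (H : Set G).Finite) (hker : amalgamKerSet H = {1}) :
    KK G₀ G₁ H 0 = {1} ∧ KK G₀ G₁ H 1 = {1} := by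
  obtain ⟨a, haG, haH⟩ := exists_notin_of_relIndex (K := G₀) hnd.1
  obtain ⟨b, hbG, hbH⟩ := exists_notin_of_relIndex (K := G₁) hnd.2.1
  have ha0 : a ∈ sdG G₀ G₁ 0 := by simpa [sdG] using haG
  have hb1 : b ∈ sdG G₀ G₁ 1 := by simpa [sdG] using hbG
  have hKK2 : KK G₀ G₁ H 2 = KK G₀ G₁ H 0 := KK_congr (by omega)
  set S0 := KK G₀ G₁ H 0 with hS0
  set S1 := KK G₀ G₁ H 1 with hS1
  have hfin0 : S0.Finite := hfin.subset KK_sub_H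
  have hfin1 : S1.Finite := hfin.subset KK_sub_H
  have hinj : ∀ u : G, Function.Injective (fun z => u⁻¹ * z * u) := by
    intro u z1 z2 h12
    have h2 := congrArg (fun w => u * w * u⁻¹) h12
    simpa [mul_assoc] using h2
  -- the two conjugation maps
  have him01 : ∀ u, u ∈ sdG G₀ G₁ 0 → u ∉ H →
      (fun z => u⁻¹ * z * u) '' S0 ⊆ S1 := by
    rintro u hu hun _ ⟨z, hz, rfl⟩
    exact conj_KK ha hu hun hz
  have him10 : ∀ v, v ∈ sdG G₀ G₁ 1 → v ∉ H →
      (fun z => v⁻¹ * z * v) '' S1 ⊆ S0 := by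
    rintro v hv hvn _ ⟨z, hz, rfl⟩
    rw [← hKK2]
    exact conj_KK ha hv hvn hz
  have hcard : S0.ncard = S1.ncard := by
    have h1 : S0.ncard ≤ S1.ncard := by
      rw [← Set.ncard_image_of_injective S0 (hinj a)]
      exact Set.ncard_le_ncard (him01 a ha0 haH) hfin1
    have h2 : S1.ncard ≤ S0.ncard := by
      rw [← Set.ncard_image_of_injective S1 (hinj b)]
      exact Set.ncard_le_ncard (him10 b hb1 hbH) hfin0
    omega
  have heq01 : ∀ u, u ∈ sdG G₀ G₁ 0 → u ∉ H →
      (fun z => u⁻¹ * z * u) '' S0 = S1 := by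
    intro u hu hun
    refine Set.eq_of_subset_of_ncard_le (him01 u hu hun) ?_ hfin1
    rw [Set.ncard_image_of_injective S0 (hinj u)]
    omega
  have heq10 : ∀ v, v ∈ sdG G₀ G₁ 1 → v ∉ H →
      (fun z => v⁻¹ * z * v) '' S1 = S0 := by
    intro v hv hvn
    refine Set.eq_of_subset_of_ncard_le (him10 v hv hvn) ?_ hfin0
    rw [Set.ncard_image_of_injective S1 (hinj v)]
    omega
  set U := S0 ∪ S1 with hU
  have hletter : ∀ y, y ∈ ((G₀ : Set G) ∪ (G₁ : Set G)) → ∀ z ∈ U, y⁻¹ * z * y ∈ U := by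
    intro y hy z hz
    by_cases hyH : y ∈ H
    · rcases hz with hz | hz
      · exact Or.inl (hconj_KK ha hyH hz)
      · exact Or.inr (hconj_KK ha hyH hz)
    · rcases hy with hy | hy
      · have hy0 : y ∈ sdG G₀ G₁ 0 := by simpa [sdG] using hy
        rcases hz with hz | hz
        · exact Or.inr (conj_KK ha hy0 hyH hz)
        · -- z ∈ S1 : use heq01 with u := y⁻¹ : y S0 y⁻¹ = S1, so y⁻¹ S1 y = S0
          have hy0' : y⁻¹ ∈ sdG G₀ G₁ 0 := inv_mem hy0
          have h2 := heq01 y⁻¹ hy0' (notin_H_inv hyH)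
          rw [← h2] at hz
          obtain ⟨z', hz', hz'eq⟩ := hz
          refine Or.inl ?_
          have : y⁻¹ * z * y = z' := by
            rw [← hz'eq]; group
          rw [this]; exact hz'
      · have hy1 : y ∈ sdG G₀ G₁ 1 := by simpa [sdG] using hy
        rcases hz with hz | hz
        · -- z ∈ S0: y⁻¹ S0 y = S1 from heq10 at y⁻¹
          have hy1' : y⁻¹ ∈ sdG G₀ G₁ 1 := inv_mem hy1
          have h2 := heq10 y⁻¹ hy1' (notin_H_inv hyH)
          rw [← h2] at hz
          obtain ⟨z', hz', hz'eq⟩ := hz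
          refine Or.inr ?_
          have : y⁻¹ * z * y = z' := by
            rw [← hz'eq]; group
          rw [this]; exact hz'
        · have h2 := conj_KK ha hy1 hyH hz
          rw [hKK2] at h2
          exact Or.inl h2
  have hlist : ∀ (l : List G), (∀ y ∈ l, y ∈ ((G₀ : Set G) ∪ (G₁ : Set G))) →
      ∀ z ∈ U, (l.prod)⁻¹ * z * l.prod ∈ U := by
    intro l
    induction l with
    | nil => intro _ z hz; simpa using hz
    | cons y t ih =>
      intro hmem z hz
      have h1 := hletter y (hmem y (by simp)) z hz
      have h2 := ih (fun y' hy' => hmem y' (by simp [hy'])) _ h1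
      have e : (t.prod)⁻¹ * (y⁻¹ * z * y) * t.prod
          = ((y :: t).prod)⁻¹ * z * (y :: t).prod := by
        simp [mul_assoc]
      rwa [e] at h2
  have hUker : U ⊆ amalgamKerSet H := by
    intro z hz
    refine Set.mem_iInter.mpr fun g => ?_
    obtain ⟨l, hl, hlprod⟩ := exists_word ha g
    have := hlist l hl z hz
    rw [hlprod] at this
    show g⁻¹ * z * g ∈ H
    rcases this with h | h
    · exact KK_sub_H h
    · exact KK_sub_H h
  rw [hker] at hUker
  constructor
  · refine Set.eq_of_subset_of_ncard_le ?_ ?_ (by simp)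
    · intro z hz; exact hUker (Or.inl hz)
    · have : (1 : G) ∈ S0 := one_mem_KK 0
      have h2 : ({1} : Set G) ⊆ S0 := by simpa using this
      exact Set.ncard_le_ncard h2 hfin0
  · refine Set.eq_of_subset_of_ncard_le ?_ ?_ (by simp)
    · intro z hz; exact hUker (Or.inr hz)
    · have : (1 : G) ∈ S1 := one_mem_KK 1
      have h2 : ({1} : Set G) ⊆ S1 := by simpa using this
      exact Set.ncard_le_ncard h2 hfin1

/-! ### (iii) → (v) -/

theorem KK_to_exists (ha : IsAmalgam G₀ G₁ H) (hfin : (H : Set G).Finite)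
    (hkk : KK G₀ G₁ H 0 = {1} ∧ KK G₀ G₁ H 1 = {1}) :
    ∃ g : G, (H : Set G) ∩ {x | g⁻¹ * x * g ∈ H} = {1} := by
  classical
  set Dset : G → Set G := fun c => (H : Set G) ∩ {x | c⁻¹ * x * c ∈ H} with hDdef
  have hDfin : ∀ c, (Dset c).Finite := fun c => hfin.inter_of_left _
  set N : Set ℕ := {n | ∃ (j : ℕ) (w : List G), AW G₀ G₁ H j w ∧ n = (Dset w.prod).ncard}
    with hNdef
  have hNne : N.Nonempty := ⟨(Dset (1 : G)).ncard, 0, [], trivial, by simp⟩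
  obtain ⟨j₀, w₀, hw₀, hn₀⟩ := Nat.sInf_mem hNne
  refine ⟨w₀.prod, ?_⟩
  have hone : (1 : G) ∈ Dset w₀.prod := ⟨one_mem H, by simpa using one_mem H⟩
  have hsub : Dset w₀.prod ⊆ {1} := by
    intro x hxD
    set y := (w₀.prod)⁻¹ * x * w₀.prod with hydef
    have hyH : y ∈ H := hxD.2
    have hyKK : y ∈ KK G₀ G₁ H ((w₀.length + j₀) % 2) := by
      rw [mem_KK_iff]
      intro k g hg
      rcases Nat.eq_zero_or_pos k with rfl | hk
      · have hgH : g ∈ H := by rw [TT, if_pos rfl] at hg; exact hg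
        exact mul_mem (mul_mem (inv_mem hgH) hyH) hgH
      · rw [TT, if_neg (by omega)] at hg
        obtain ⟨v, hlen, hv, rfl⟩ := hg
        have hv' : AW G₀ G₁ H (w₀.length + j₀) v :=
          AW.congr' (by omega) ((aw_iff v).mp hv)
        have hW : AW G₀ G₁ H j₀ (w₀ ++ v) := hw₀.append hv'
        have hmin : sInf N ≤ (Dset (w₀ ++ v).prod).ncard :=
          Nat.sInf_le ⟨j₀, w₀ ++ v, hW, rfl⟩
        have hsub2 : Dset (w₀ ++ v).prod ⊆ Dset w₀.prod := by
          rintro z ⟨hzH, hzc⟩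
          exact ⟨hzH, prefix_conj ha w₀ v hzH hw₀ hv' hzc⟩
        have heqD : Dset (w₀ ++ v).prod = Dset w₀.prod := by
          refine Set.eq_of_subset_of_ncard_le hsub2 ?_ (hDfin _)
          rw [← hn₀]
          exact hmin
        have hx2 : x ∈ Dset (w₀ ++ v).prod := heqD ▸ hxD
        have h3 : ((w₀ ++ v).prod)⁻¹ * x * (w₀ ++ v).prod ∈ H := hx2.2
        have e : ((w₀ ++ v).prod)⁻¹ * x * (w₀ ++ v).prod = (v.prod)⁻¹ * y * v.prod := by
          rw [hydef]; simp [mul_assoc]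
        rwa [e] at h3
    have hy1 : y = 1 := by
      rcases Nat.mod_two_eq_zero_or_one (w₀.length + j₀) with hpar | hpar
      · rw [hpar, hkk.1] at hyKK
        simpa using hyKK
      · rw [hpar, hkk.2] at hyKK
        simpa using hyKK
    have : x = w₀.prod * y * (w₀.prod)⁻¹ := by rw [hydef]; group
    rw [this, hy1]
    simp
  exact Set.eq_of_subset_of_ncard_le hsub
    (by
      have h2 : ({1} : Set G) ⊆ Dset w₀.prod := by simpa using hone
      exact Set.ncard_le_ncard h2 (hDfin _)) (by simp)

/-! ### more word operations -/

theorem AW.take : ∀ {w : List G} {j : ℕ} (m : ℕ), AW G₀ G₁ H j w → AW G₀ G₁ H j (w.take m) := by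
  intro w
  induction w with
  | nil => intro j m _; simp; trivial
  | cons a t ih =>
    intro j m h
    match m with
    | 0 => trivial
    | (m+1) => exact ⟨h.1, ih m h.2⟩

theorem AW.drop : ∀ {w : List G} {j : ℕ} (k : ℕ), AW G₀ G₁ H j w →
    AW G₀ G₁ H (k + j) (w.drop k) := by
  intro w
  induction w with
  | nil => intro j k _; simp; trivial
  | cons a t ih =>
    intro j k h
    match k with
    | 0 => simpa using h
    | (k+1) =>
      simp only [List.drop_succ_cons]
      exact (ih k h.2).index_eq (by omega)

theorem AW.dropLast {w : List G} {j : ℕ} (h : AW G₀ G₁ H j w) :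
    AW G₀ G₁ H j w.dropLast := by
  rw [List.dropLast_eq_take]
  exact h.take _

theorem AW.getLast_mem : ∀ {w : List G} {j : ℕ} (hne : w ≠ []), AW G₀ G₁ H j w →
    w.getLast hne ∈ sdG G₀ G₁ (w.length - 1 + j) ∧ w.getLast hne ∉ H := by
  intro w
  induction w with
  | nil => intro j hne; exact absurd rfl hne
  | cons a t ih =>
    intro j hne h
    rcases t with _ | ⟨b, t'⟩
    · simpa using h.1
    · have h2 := ih (by simp) h.2
      rw [List.getLast_cons (by simp)]
      refine ⟨?_, h2.2⟩
      have e : (b :: t').length - 1 + (j + 1) = (a :: b :: t').length - 1 + j := by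
        simp only [List.length_cons]; omega
      rw [← e]
      exact h2.1

/-- replacing the last letter `g` of an alternating word by `g * a` -/
theorem AW.mulLast {w : List G} {j : ℕ} (hw : AW G₀ G₁ H j w) (hne : w ≠ []) {a : G}
    (hmem : w.getLast hne * a ∈ sdG G₀ G₁ (w.length - 1 + j))
    (hnotH : w.getLast hne * a ∉ H) :
    AW G₀ G₁ H j (w.dropLast ++ [w.getLast hne * a]) ∧
      (w.dropLast ++ [w.getLast hne * a]).prod = w.prod * a ∧
      (w.dropLast ++ [w.getLast hne * a]).length = w.length := by
  have hlen : w.dropLast.length = w.length - 1 := List.length_dropLast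
  refine ⟨?_, ?_, ?_⟩
  · refine hw.dropLast.append ?_
    rw [hlen]
    exact AW.single hmem hnotH
  · have e : w.dropLast ++ [w.getLast hne] = w := List.dropLast_append_getLast hne
    calc (w.dropLast ++ [w.getLast hne * a]).prod
        = w.dropLast.prod * (w.getLast hne * a) := by simp
      _ = (w.dropLast.prod * w.getLast hne) * a := by rw [mul_assoc]
      _ = (w.dropLast ++ [w.getLast hne]).prod * a := by simp
      _ = w.prod * a := by rw [e]
  · have : w.length ≠ 0 := fun hc => hne (List.length_eq_zero_iff.mp hc)
    simp [hlen]
    omega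

/-! ### nondegeneracy data -/

theorem big_of_relIndex {K : Subgroup G} (h1 : H.relIndex K ≠ 1) (h2 : H.relIndex K ≠ 2) :
    ∃ α β : G, (α ∈ K ∧ α ∉ H) ∧ (β ∈ K ∧ β ∉ H) ∧ α⁻¹ * β ∉ H := by
  obtain ⟨a, haK, haH⟩ := exists_notin_of_relIndex h1
  by_contra hbig
  push_neg at hbig
  apply h2
  rw [Subgroup.relIndex, Subgroup.index_eq_two_iff]
  refine ⟨⟨a, haK⟩, fun b => ?_⟩
  by_cases hbH : (b : G) ∈ H
  · refine Or.inr ⟨?_, ?_⟩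
    · exact Subgroup.mem_subgroupOf.mpr hbH
    · intro hc
      have hc2 : (b : G) * a ∈ H := Subgroup.mem_subgroupOf.mp hc
      exact haH (by
        have := mul_mem (inv_mem hbH) hc2
        simpa [mul_assoc] using this)
  · refine Or.inl ⟨?_, fun hc => hbH (Subgroup.mem_subgroupOf.mp hc)⟩
    refine Subgroup.mem_subgroupOf.mpr ?_
    have h3 := hbig ((b : G))⁻¹ a ⟨inv_mem b.2, notin_H_inv hbH⟩ ⟨haK, haH⟩
    simpa using h3

theorem bigSide (ha : IsAmalgam G₀ G₁ H) (hnd : Nondegenerate G₀ G₁ H) :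
    ∃ p : ℕ, (∃ α β : G, (α ∈ sdG G₀ G₁ p ∧ α ∉ H) ∧ (β ∈ sdG G₀ G₁ p ∧ β ∉ H) ∧
        α⁻¹ * β ∉ H) ∧ (∃ b : G, b ∈ sdG G₀ G₁ (p + 1) ∧ b ∉ H) := by
  by_cases h0 : H.relIndex G₀ = 2
  · have h1 : H.relIndex G₁ ≠ 2 := fun hc => hnd.2.2 ⟨h0, hc⟩
    obtain ⟨α, β, hα, hβ, hαβ⟩ := big_of_relIndex hnd.2.1 h1
    obtain ⟨b, hbG, hbH⟩ := exists_notin_of_relIndex (K := G₀) hnd.1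
    refine ⟨1, ⟨α, β, ⟨?_, hα.2⟩, ⟨?_, hβ.2⟩, hαβ⟩, b, ?_, hbH⟩
    · simpa [sdG] using hα.1
    · simpa [sdG] using hβ.1
    · simpa [sdG] using hbG
  · obtain ⟨α, β, hα, hβ, hαβ⟩ := big_of_relIndex hnd.1 h0
    obtain ⟨b, hbG, hbH⟩ := exists_notin_of_relIndex (K := G₁) hnd.2.1
    refine ⟨0, ⟨α, β, ⟨?_, hα.2⟩, ⟨?_, hβ.2⟩, hαβ⟩, b, ?_, hbH⟩
    · simpa [sdG] using hα.1
    · simpa [sdG] using hβ.1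
    · simpa [sdG] using hbG

/-! ### the detector word -/

theorem detector (ha : IsAmalgam G₀ G₁ H) {p : ℕ} {bb aa : G}
    (hbb : bb ∈ sdG G₀ G₁ (p + 1) ∧ bb ∉ H) (haa : aa ∈ sdG G₀ G₁ p ∧ aa ∉ H)
    (hv : ∃ t : G, (H : Set G) ∩ {x | t⁻¹ * x * t ∈ H} = {1}) :
    ∃ τ : List G, AW G₀ G₁ H (p + 1) τ ∧ τ ≠ [] ∧ Even τ.length ∧
      ∀ x ∈ H, (τ.prod)⁻¹ * x * τ.prod ∈ H → x = 1 := by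
  obtain ⟨t, ht⟩ := hv
  have hmemt : ∀ x : G, x ∈ H → t⁻¹ * x * t ∈ H → x = 1 := by
    intro x hx hconj
    have : x ∈ (H : Set G) ∩ {z | t⁻¹ * z * t ∈ H} := ⟨hx, hconj⟩
    rw [ht] at this
    simpa using this
  rcases nf_all ha t with htH | ⟨j, w, hwne, hw, hwprod⟩
  · -- H is trivial
    have hH1 : ∀ x : G, x ∈ H → x = 1 := by
      intro x hx
      exact hmemt x hx (mul_mem (mul_mem (inv_mem htH) hx) htH)
    refine ⟨[bb, aa], ⟨⟨hbb.1, hbb.2⟩, ⟨⟨?_, haa.2⟩, trivial⟩⟩, by simp, by simp, ?_⟩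
    · rw [sdG_congr (j' := p) (by omega)]; exact haa.1
    · intro x hx _; exact hH1 x hx
  · -- pad the word of t
    set w₁ := if j % 2 = (p + 1) % 2 then w else bb :: w with hw₁def
    have hw₁ : AW G₀ G₁ H (p + 1) w₁ := by
      rw [hw₁def]
      split
      · exact hw.congr' (by omega)
      · rename_i hjj
        exact ⟨⟨hbb.1, hbb.2⟩, hw.congr' (by omega)⟩
    have hw₁ne : w₁ ≠ [] := by
      rw [hw₁def]; split
      · exact hwne
      · simp
    have hdet₁ : ∀ x : G, x ∈ H → (w₁.prod)⁻¹ * x * w₁.prod ∈ H → x = 1 := by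
      intro x hx hconj
      rw [hw₁def] at hconj
      by_cases hjj : j % 2 = (p + 1) % 2
      · rw [if_pos hjj] at hconj
        rw [hwprod] at hconj
        exact hmemt x hx hconj
      · rw [if_neg hjj] at hconj
        have hx₁ : bb⁻¹ * x * bb ∈ H := by
          have h2 := prefix_conj ha [bb] w hx
            (AW.single (j := p + 1) hbb.1 hbb.2)
            (hw.congr' (by simp only [List.length_cons, List.length_nil]; omega))
            (by simpa using hconj)
          simpa using h2
        have ht2 : t⁻¹ * (bb⁻¹ * x * bb) * t ∈ H := by
          have e : t⁻¹ * (bb⁻¹ * x * bb) * t = ((bb :: w).prod)⁻¹ * x * (bb :: w).prod := by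
            rw [← hwprod]
            simp [mul_assoc]
          rw [e]; exact hconj
        have h3 := hmemt _ hx₁ ht2
        have : x = bb * (bb⁻¹ * x * bb) * bb⁻¹ := by group
        rw [this, h3]; simp
    by_cases heven : Even w₁.length
    · exact ⟨w₁, hw₁, hw₁ne, heven, hdet₁⟩
    · have hc : aa ∈ sdG G₀ G₁ (w₁.length + (p + 1)) := by
        rw [sdG_congr (j' := p) (by
          have h2 : w₁.length % 2 = 1 := Nat.odd_iff.mp (Nat.not_even_iff_odd.mp heven)
          omega)]
        exact haa.1
      refine ⟨w₁ ++ [aa], hw₁.append (AW.single hc haa.2), by simp,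
        by
          simp only [List.length_append, List.length_cons, List.length_nil]
          rw [Nat.even_add_one]
          exact heven, ?_⟩
      intro x hx hconj
      exact hdet₁ x hx (prefix_conj ha w₁ [aa] hx hw₁ (AW.single hc haa.2) hconj)

/-! ### gadget machine -/

def AAx (G₀ G₁ H : Subgroup G) (p : ℕ) (x : G) : Prop :=
  ∃ w : List G, w ≠ [] ∧ AW G₀ G₁ H p w ∧ Odd w.length ∧ w.prod = x

def BBx (G₀ G₁ H : Subgroup G) (p : ℕ) (x : G) : Prop :=
  ∃ w : List G, w ≠ [] ∧ AW G₀ G₁ H (p + 1) w ∧ Odd w.length ∧ w.prod = x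

def SAND (G₀ G₁ H : Subgroup G) (p : ℕ) (τ : List G) (x : G) : Prop :=
  ∃ y, AAx G₀ G₁ H p y ∧ x = (τ.prod)⁻¹ * y * τ.prod

theorem m1 {p : ℕ} {bb : G} (hbb1 : bb ∈ sdG G₀ G₁ (p + 1)) (hbb2 : bb ∉ H)
    {x : G} (hx : AAx G₀ G₁ H p x) : BBx G₀ G₁ H p (bb⁻¹ * x * bb) := by
  obtain ⟨w, hne, hw, hodd, rfl⟩ := hx
  have hoddm := Nat.odd_iff.mp hodd
  refine ⟨bb⁻¹ :: (w ++ [bb]), by simp, ?_, ?_, by simp [mul_assoc]⟩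
  · refine ⟨⟨inv_mem hbb1, notin_H_inv hbb2⟩, ?_⟩
    refine (hw.congr' (by omega)).append ?_
    refine AW.single ?_ hbb2
    rw [sdG_congr (j' := p + 1) (by omega)]
    exact hbb1
  · rw [Nat.odd_iff]
    simp only [List.length_cons, List.length_append, List.length_nil]
    omega

theorem m2 {p : ℕ} {aa : G} (haa1 : aa ∈ sdG G₀ G₁ p) (haa2 : aa ∉ H)
    {x : G} (hx : BBx G₀ G₁ H p x) : AAx G₀ G₁ H p (aa⁻¹ * x * aa) := by
  obtain ⟨w, hne, hw, hodd, rfl⟩ := hx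
  have hoddm := Nat.odd_iff.mp hodd
  refine ⟨aa⁻¹ :: (w ++ [aa]), by simp, ?_, ?_, by simp [mul_assoc]⟩
  · refine ⟨⟨inv_mem haa1, notin_H_inv haa2⟩, ?_⟩
    refine hw.append ?_
    refine AW.single ?_ haa2
    rw [sdG_congr (j' := p) (by omega)]
    exact haa1
  · rw [Nat.odd_iff]
    simp only [List.length_cons, List.length_append, List.length_nil]
    omega

theorem gad_safe {p : ℕ} {s : List G} (hs : AW G₀ G₁ H (p + 1) s) (hse : Even s.length)
    {x : G} (hx : AAx G₀ G₁ H p x) : AAx G₀ G₁ H p ((s.prod)⁻¹ * x * s.prod) := by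
  by_cases hsne : s = []
  · subst hsne; simpa using hx
  · obtain ⟨w, hwne, hw, hodd, rfl⟩ := hx
    have hoddm := Nat.odd_iff.mp hodd
    have hsm := Nat.even_iff.mp hse
    refine ⟨AmalgamAux.revInv s ++ (w ++ s), ?_, ?_, ?_, ?_⟩
    · intro hc
      exact hwne (List.append_eq_nil_iff.mp (List.append_eq_nil_iff.mp hc).2).1
    · refine AW.append ((hs.revInv).congr' (by omega)) ?_
      rw [revInv_length]
      refine AW.append (hw.congr' (by omega)) ?_
      exact hs.congr' (by omega)
    · rw [Nat.odd_iff]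
      simp only [List.length_append, revInv_length]
      omega
    · simp [revInv_prod, mul_assoc]

theorem sand_sub_AA {p : ℕ} {τ : List G} (hτaw : AW G₀ G₁ H (p + 1) τ)
    (hτe : Even τ.length) {x : G} (hx : SAND G₀ G₁ H p τ x) : AAx G₀ G₁ H p x := by
  obtain ⟨y, hy, rfl⟩ := hx
  exact gad_safe hτaw hτe hy

theorem mA_safe (ha : IsAmalgam G₀ G₁ H) {p : ℕ} {τ : List G} (hτaw : AW G₀ G₁ H (p + 1) τ)
    (hτne : τ ≠ []) (hτe : Even τ.length) {a : G} (haA : a ∈ sdG G₀ G₁ p)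
    (hcondH : τ.getLast hτne * a ∉ H) :
    ∀ z, SAND G₀ G₁ H p τ z → AAx G₀ G₁ H p (a⁻¹ * z * a) := by
  rintro z ⟨y, hy, rfl⟩
  have hglast := AW.getLast_mem hτne hτaw
  have hl1 : 1 ≤ τ.length := by
    have : τ.length ≠ 0 := fun hc => hτne (List.length_eq_zero_iff.mp hc)
    omega
  have hsm := Nat.even_iff.mp hτe
  have hmem2 : τ.getLast hτne * a ∈ sdG G₀ G₁ (τ.length - 1 + (p + 1)) := by
    refine mul_mem hglast.1 ?_
    rw [sdG_congr (j' := p) (by omega)]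
    exact haA
  obtain ⟨hτa_aw, hτa_prod, hτa_len⟩ := hτaw.mulLast hτne hmem2 hcondH
  have heq : a⁻¹ * ((τ.prod)⁻¹ * y * τ.prod) * a
      = ((τ.dropLast ++ [τ.getLast hτne * a]).prod)⁻¹ * y
        * (τ.dropLast ++ [τ.getLast hτne * a]).prod := by
    rw [hτa_prod]; group
  rw [heq]
  exact gad_safe hτa_aw (by rw [hτa_len]; exact hτe) hy

theorem det_move (ha : IsAmalgam G₀ G₁ H) {p : ℕ} {τ : List G}
    (hτaw : AW G₀ G₁ H (p + 1) τ) (hτne : τ ≠ []) (hτe : Even τ.length)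
    (hτdet : ∀ x ∈ H, (τ.prod)⁻¹ * x * τ.prod ∈ H → x = 1)
    {x : G} (hx : x ∈ H) (hxne : x ≠ 1) :
    AAx G₀ G₁ H p ((τ.prod)⁻¹ * x * τ.prod) := by
  rcases casc ha τ hx hτaw with h | ⟨i, hi, m, hm, heq⟩
  · exact absurd (hτdet x hx h) hxne
  · set d := τ.drop (i + 1) with hddef
    have hd : AW G₀ G₁ H ((i + 1) + (p + 1)) d := hτaw.drop (i + 1)
    have hdl : d.length = τ.length - (i + 1) := List.length_drop
    have hsm := Nat.even_iff.mp hτe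
    refine ⟨AmalgamAux.revInv d ++ (m :: d),
      fun hc => List.cons_ne_nil _ _ (List.append_eq_nil_iff.mp hc).2, ?_, ?_, ?_⟩
    · refine AW.append ((hd.revInv).congr' (by omega)) ?_
      rw [revInv_length]
      refine ⟨⟨?_, hm.2⟩, ?_⟩
      · rw [sdG_congr (j' := i + (p + 1)) (by omega)]
        exact hm.1
      · exact hd.congr' (by omega)
    · rw [Nat.odd_iff]
      simp only [List.length_append, revInv_length, List.length_cons]
      omega
    · rw [heq]
      simp [revInv_prod, mul_assoc]

theorem pair_safe {p : ℕ} {bb aa : G} (hbb1 : bb ∈ sdG G₀ G₁ (p + 1)) (hbb2 : bb ∉ H)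
    (haa1 : aa ∈ sdG G₀ G₁ p) (haa2 : aa ∉ H) :
    ∀ z, AAx G₀ G₁ H p z → AAx G₀ G₁ H p ((bb * aa)⁻¹ * z * (bb * aa)) := by
  intro z hz
  have h2 := m2 haa1 haa2 (m1 hbb1 hbb2 hz)
  have e : aa⁻¹ * (bb⁻¹ * z * bb) * aa = (bb * aa)⁻¹ * z * (bb * aa) := by group
  rwa [e] at h2

theorem gadget_step (ha : IsAmalgam G₀ G₁ H) {p : ℕ} {τ : List G}
    (hτaw : AW G₀ G₁ H (p + 1) τ) (hτne : τ ≠ []) (hτe : Even τ.length)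
    (hτdet : ∀ x ∈ H, (τ.prod)⁻¹ * x * τ.prod ∈ H → x = 1)
    {αα ββ bb : G} (hαα : αα ∈ sdG G₀ G₁ p ∧ αα ∉ H) (hββ : ββ ∈ sdG G₀ G₁ p ∧ ββ ∉ H)
    (hαβ : αα⁻¹ * ββ ∉ H) (hbb : bb ∈ sdG G₀ G₁ (p + 1) ∧ bb ∉ H) :
    ∀ y : G, y ≠ 1 → ∃ e : G, AAx G₀ G₁ H p (e⁻¹ * y * e) ∧
      ∀ z, SAND G₀ G₁ H p τ z → AAx G₀ G₁ H p (e⁻¹ * z * e) := by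
  have hchoice : ∀ g : G, ∃ c : G, (c ∈ sdG G₀ G₁ p ∧ c ∉ H) ∧ g * c ∉ H := by
    intro g
    by_cases h1 : g * αα ∈ H
    · refine ⟨ββ, hββ, fun h2 => hαβ ?_⟩
      have h3 := mul_mem (inv_mem h1) h2
      have e : (g * αα)⁻¹ * (g * ββ) = αα⁻¹ * ββ := by group
      rwa [e] at h3
    · exact ⟨αα, hαα, h1⟩
  intro y hy
  rcases nf_all ha y with hyH | ⟨j, w, hwne, hw, hwprod⟩
  · refine ⟨τ.prod, det_move ha hτaw hτne hτe hτdet hyH hy, ?_⟩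
    rintro z ⟨y', hy', rfl⟩
    exact gad_safe hτaw hτe (gad_safe hτaw hτe hy')
  · subst hwprod
    have hsafe : ∀ c : G, c ∈ sdG G₀ G₁ p → c ∉ H →
        ∀ z, SAND G₀ G₁ H p τ z → AAx G₀ G₁ H p ((bb * c)⁻¹ * z * (bb * c)) := by
      intro c hc1 hc2 z hz
      exact pair_safe hbb.1 hbb.2 hc1 hc2 z (sand_sub_AA hτaw hτe hz)
    by_cases hq : j % 2 = p % 2
    · by_cases hodd : Odd w.length
      · -- type (A,A) : nothing to do
        refine ⟨1, ?_, ?_⟩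
        · have h2 : AAx G₀ G₁ H p w.prod := ⟨w, hwne, hw.congr' hq, hodd, rfl⟩
          simpa using h2
        · intro z hz
          have h2 := sand_sub_AA hτaw hτe hz
          simpa using h2
      · -- type (A,B)
        have hw' : AW G₀ G₁ H p w := hw.congr' hq
        have hleven : w.length % 2 = 0 := Nat.even_iff.mp (Nat.not_odd_iff_even.mp hodd)
        have hl2 : 2 ≤ w.length := by
          have : w.length ≠ 0 := fun hc => hwne (List.length_eq_zero_iff.mp hc)
          omega
        have hglast := AW.getLast_mem hwne hw'
        by_cases hcase : w.getLast hwne * bb ∈ H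
        · -- last letter cancels against bb
          have hydrop : w.prod * bb = w.dropLast.prod * (w.getLast hwne * bb) := by
            conv_lhs => rw [← List.dropLast_append_getLast hwne]
            simp [mul_assoc]
          have hdlen : w.dropLast.length = w.length - 1 := List.length_dropLast
          have hdne : w.dropLast ≠ [] := by
            intro hc; rw [hc] at hdlen; simp at hdlen; omega
          have hdaw : AW G₀ G₁ H p w.dropLast := hw'.dropLast
          have hdlast := AW.getLast_mem hdne hdaw
          obtain ⟨c, hc, hcond⟩ :=
            hchoice (w.dropLast.getLast hdne * (w.getLast hwne * bb))
          have hmem2 : w.dropLast.getLast hdne * ((w.getLast hwne * bb) * c)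
              ∈ sdG G₀ G₁ (w.dropLast.length - 1 + p) := by
            refine mul_mem hdlast.1 (mul_mem (H_le_sdG ha _ hcase) ?_)
            rw [sdG_congr (j' := p) (by omega)]
            exact hc.1
          have hnotH2 : w.dropLast.getLast hdne * ((w.getLast hwne * bb) * c) ∉ H := by
            intro hcc; exact hcond (by rwa [← mul_assoc] at hcc)
          obtain ⟨haw3, hprod3, hlen3⟩ := hdaw.mulLast hdne hmem2 hnotH2
          set W3 := w.dropLast.dropLast ++ [w.dropLast.getLast hdne
            * ((w.getLast hwne * bb) * c)] with hW3
          refine ⟨bb * c, ?_, hsafe c hc.1 hc.2⟩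
          refine ⟨c⁻¹ :: bb⁻¹ :: W3, by simp, ?_, ?_, ?_⟩
          · refine ⟨⟨inv_mem hc.1, notin_H_inv hc.2⟩,
              ⟨⟨inv_mem hbb.1, notin_H_inv hbb.2⟩, ?_⟩⟩
            exact haw3.congr' (by omega)
          · rw [Nat.odd_iff]
            simp only [List.length_cons, hlen3, hdlen]
            omega
          · have e5 : w.prod = w.dropLast.prod * (w.getLast hwne * bb) * bb⁻¹ := by
              rw [← hydrop]; group
            simp only [List.prod_cons, hprod3, e5]
            group
        · -- last letter merges with bb
          have hmem2 : w.getLast hwne * bb ∈ sdG G₀ G₁ (w.length - 1 + p) := by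
            refine mul_mem hglast.1 ?_
            rw [sdG_congr (j' := p + 1) (by omega)]
            exact hbb.1
          obtain ⟨haw3, hprod3, hlen3⟩ := hw'.mulLast hwne hmem2 hcase
          set W3 := w.dropLast ++ [w.getLast hwne * bb] with hW3
          have hBB : BBx G₀ G₁ H p (bb⁻¹ * w.prod * bb) := by
            refine ⟨bb⁻¹ :: W3, by simp, ?_, ?_, ?_⟩
            · exact ⟨⟨inv_mem hbb.1, notin_H_inv hbb.2⟩, haw3.congr' (by omega)⟩
            · rw [Nat.odd_iff]
              simp only [List.length_cons, hlen3]
              omega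
            · simp only [List.prod_cons, hprod3]
              rw [mul_assoc]
          refine ⟨bb * αα, ?_, hsafe αα hαα.1 hαα.2⟩
          have h2 := m2 hαα.1 hαα.2 hBB
          have e : αα⁻¹ * (bb⁻¹ * w.prod * bb) * αα
              = (bb * αα)⁻¹ * w.prod * (bb * αα) := by group
          rwa [e] at h2
    · -- starts on the B side
      have hq' : j % 2 = (p + 1) % 2 := by omega
      have hw' : AW G₀ G₁ H (p + 1) w := hw.congr' hq'
      by_cases hodd : Odd w.length
      · -- type (B,B) : single A-letter move
        obtain ⟨c, hc, hcond⟩ := hchoice (τ.getLast hτne)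
        have hBB : BBx G₀ G₁ H p w.prod := ⟨w, hwne, hw', hodd, rfl⟩
        exact ⟨c, m2 hc.1 hc.2 hBB, fun z hz =>
          mA_safe ha hτaw hτne hτe hc.1 hcond z hz⟩
      · -- type (B,A)
        have hleven : w.length % 2 = 0 := Nat.even_iff.mp (Nat.not_odd_iff_even.mp hodd)
        have hl2 : 2 ≤ w.length := by
          have : w.length ≠ 0 := fun hc => hwne (List.length_eq_zero_iff.mp hc)
          omega
        rcases w with _ | ⟨c₀, t⟩
        · exact absurd rfl hwne
        have ht : AW G₀ G₁ H (p + 2) t := hw'.2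
        have htne : t ≠ [] := by
          intro hc
          rw [hc] at hl2
          simp at hl2
        by_cases hcase : bb⁻¹ * c₀ ∈ H
        · -- first letter cancels against bb⁻¹
          rcases t with _ | ⟨t₀, t'⟩
          · exact absurd rfl htne
          obtain ⟨c, hc, hcond⟩ := hchoice (((bb⁻¹ * c₀) * t₀)⁻¹)
          have hcond' : c⁻¹ * ((bb⁻¹ * c₀) * t₀) ∉ H := by
            intro hcc
            exact hcond (by simpa using inv_mem hcc)
          refine ⟨bb * c, ?_, hsafe c hc.1 hc.2⟩
          refine ⟨(c⁻¹ * ((bb⁻¹ * c₀) * t₀)) :: (t' ++ [bb, c]), by simp, ?_, ?_, ?_⟩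
          · refine ⟨⟨?_, hcond'⟩, ?_⟩
            · refine mul_mem (inv_mem hc.1) (mul_mem (H_le_sdG ha _ hcase) ?_)
              rw [sdG_congr (j' := p + 2) (by omega)]
              exact ht.1.1
            · refine AW.append (ht.2.congr' (by omega)) ?_
              refine ⟨⟨?_, hbb.2⟩, ⟨⟨?_, hc.2⟩, trivial⟩⟩
              · rw [sdG_congr (j' := p + 1) (by
                  simp only [List.length_cons] at hleven ⊢
                  omega)]
                exact hbb.1
              · rw [sdG_congr (j' := p) (by
                  simp only [List.length_cons] at hleven ⊢
                  omega)]
                exact hc.1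
          · rw [Nat.odd_iff]
            simp only [List.length_cons, List.length_append, List.length_nil]
            simp only [List.length_cons] at hleven
            omega
          · simp only [List.prod_cons, List.prod_append, List.prod_nil, mul_one]
            group
        · -- first letter merges with bb⁻¹
          have hBB : BBx G₀ G₁ H p (bb⁻¹ * (c₀ :: t).prod * bb) := by
            refine ⟨((bb⁻¹ * c₀) :: t) ++ [bb], by simp, ?_, ?_, ?_⟩
            · refine AW.append ⟨⟨mul_mem (inv_mem hbb.1) hw'.1.1, hcase⟩, ht⟩ ?_
              refine AW.single ?_ hbb.2
              rw [sdG_congr (j' := p + 1) (by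
                simp only [List.length_cons] at hleven ⊢
                omega)]
              exact hbb.1
            · rw [Nat.odd_iff]
              simp only [List.length_append, List.length_cons, List.length_nil]
              simp only [List.length_cons] at hleven
              omega
            · simp [mul_assoc]
          refine ⟨bb * αα, ?_, hsafe αα hαα.1 hαα.2⟩
          have h2 := m2 hαα.1 hαα.2 hBB
          have e : αα⁻¹ * (bb⁻¹ * (c₀ :: t).prod * bb) * αα
              = (bb * αα)⁻¹ * (c₀ :: t).prod * (bb * αα) := by group
          rwa [e] at h2

theorem simultaneous (ha : IsAmalgam G₀ G₁ H) {p : ℕ} {τ : List G}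
    (hτaw : AW G₀ G₁ H (p + 1) τ) (hτne : τ ≠ []) (hτe : Even τ.length)
    (hτdet : ∀ x ∈ H, (τ.prod)⁻¹ * x * τ.prod ∈ H → x = 1)
    {αα ββ bb : G} (hαα : αα ∈ sdG G₀ G₁ p ∧ αα ∉ H) (hββ : ββ ∈ sdG G₀ G₁ p ∧ ββ ∉ H)
    (hαβ : αα⁻¹ * ββ ∉ H) (hbb : bb ∈ sdG G₀ G₁ (p + 1) ∧ bb ∉ H)
    (F : Finset G) : (1 : G) ∉ F → ∃ d : G, ∀ f ∈ F, AAx G₀ G₁ H p (d⁻¹ * f * d) := by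
  classical
  induction F using Finset.induction_on with
  | empty => intro _; exact ⟨1, by simp⟩
  | @insert f F' hfF' ih =>
    intro h1F
    have hf1 : f ≠ 1 := fun hc => h1F (by rw [← hc]; exact Finset.mem_insert_self f F')
    obtain ⟨d', hd'⟩ := ih (fun hc => h1F (Finset.mem_insert_of_mem hc))
    set d'' := d' * τ.prod with hd''
    have hsand : ∀ f' ∈ F', SAND G₀ G₁ H p τ (d''⁻¹ * f' * d'') := by
      intro f' hf'
      refine ⟨d'⁻¹ * f' * d', hd' f' hf', ?_⟩
      rw [hd'']; group
    have hyne : d''⁻¹ * f * d'' ≠ 1 := by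
      intro hc
      apply hf1
      have h2 := congrArg (fun z => d'' * z * d''⁻¹) hc
      simpa [mul_assoc] using h2
    obtain ⟨e, he1, he2⟩ := gadget_step ha hτaw hτne hτe hτdet hαα hββ hαβ hbb
      (d''⁻¹ * f * d'') hyne
    refine ⟨d'' * e, ?_⟩
    intro f' hf'
    rcases Finset.mem_insert.mp hf' with rfl | hf'2
    · have e2 : e⁻¹ * (d''⁻¹ * f' * d'') * e = (d'' * e)⁻¹ * f' * (d'' * e) := by group
      rw [← e2]
      exact he1
    · have e2 : e⁻¹ * (d''⁻¹ * f' * d'') * e = (d'' * e)⁻¹ * f' * (d'' * e) := by group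
      rw [← e2]
      exact he2 _ (hsand f' hf'2)

/-! ### marker words -/

def repBA (bb aa : G) : ℕ → List G
  | 0 => []
  | n + 1 => repBA bb aa n ++ [bb, aa]

theorem repBA_length (bb aa : G) (n : ℕ) : (repBA bb aa n).length = 2 * n := by
  induction n with
  | zero => rfl
  | succ n ih =>
    simp only [repBA, List.length_append, ih, List.length_cons, List.length_nil]
    omega

theorem repBA_aw {p : ℕ} {bb aa : G} (hbb : bb ∈ sdG G₀ G₁ (p + 1)) (hbb2 : bb ∉ H)
    (haa : aa ∈ sdG G₀ G₁ p) (haa2 : aa ∉ H) (n : ℕ) :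
    AW G₀ G₁ H (p + 1) (repBA bb aa n) := by
  induction n with
  | zero => trivial
  | succ n ih =>
    refine ih.append ?_
    rw [repBA_length]
    refine ⟨⟨?_, hbb2⟩, ⟨⟨?_, haa2⟩, trivial⟩⟩
    · rw [sdG_congr (j' := p + 1) (by omega)]; exact hbb
    · rw [sdG_congr (j' := p) (by omega)]; exact haa

theorem repBA_prefix (bb aa : G) {i j : ℕ} (hij : i < j) :
    ∃ r, repBA bb aa j = (repBA bb aa i ++ [bb, aa]) ++ r := by
  induction j with
  | zero => omega
  | succ j ih =>
    rcases Nat.lt_succ_iff_lt_or_eq.mp hij with h | h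
    · obtain ⟨r, hr⟩ := ih h
      refine ⟨r ++ [bb, aa], ?_⟩
      show repBA bb aa j ++ [bb, aa] = _
      rw [hr]
      simp [List.append_assoc]
    · subst h
      exact ⟨[], by simp [repBA]⟩

/-! ### (v) → (iv) -/

theorem exists_to_powers (ha : IsAmalgam G₀ G₁ H) (hnd : Nondegenerate G₀ G₁ H)
    (hv : ∃ g : G, (H : Set G) ∩ {x | g⁻¹ * x * g ∈ H} = {1}) : IsPowersGroup G := by
  classical
  obtain ⟨p, ⟨αα, ββ, hαα, hββ, hαβ⟩, ⟨bb, hbbG, hbbH⟩⟩ := bigSide ha hnd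
  obtain ⟨τ, hτaw, hτne, hτeven, hτdet⟩ := detector ha ⟨hbbG, hbbH⟩ hαα hv
  intro F h1F k _
  obtain ⟨d, hd⟩ := simultaneous ha hτaw hτne hτeven hτdet hαα hββ hαβ ⟨hbbG, hbbH⟩ F h1F
  set D' : Set G := (H : Set G) ∪ {x | ∃ w : List G, w ≠ [] ∧ AW G₀ G₁ H (p + 1) w ∧ w.prod = x}
    with hD'
  set E' : Set G := {x | ∃ w : List G, w ≠ [] ∧ AW G₀ G₁ H p w ∧ w.prod = x} with hE'
  have hcover : ∀ x : G, x ∈ D' ∪ E' := by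
    intro x
    rcases nf_all ha x with hx | ⟨j, w, hwne, hw, rfl⟩
    · exact Or.inl (Or.inl hx)
    · by_cases hj : j % 2 = p % 2
      · exact Or.inr ⟨w, hwne, hw.congr' hj, rfl⟩
      · exact Or.inl (Or.inr ⟨w, hwne, hw.congr' (by omega), rfl⟩)
  have hdisjDE : ∀ x, x ∈ D' → x ∈ E' → False := by
    rintro x hxD ⟨w, hwne, hw, rfl⟩
    rcases hxD with hxH | ⟨v, hvne, hv2, hveq⟩
    · exact prod_notin ha hw hwne hxH
    · have := parity_eq ha hv2 hw hvne (by rw [hveq]; simpa using one_mem H)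
      omega
  have hmap : ∀ f' x, AAx G₀ G₁ H p f' → x ∈ D' → f' * x ∈ E' := by
    intro f' x hf' hx
    obtain ⟨w, hwne, hw, hodd, rfl⟩ := hf'
    rcases hx with hxH | ⟨v, hvne, hv2, rfl⟩
    · have hglast := AW.getLast_mem hwne hw
      have hmem2 : w.getLast hwne * x ∈ sdG G₀ G₁ (w.length - 1 + p) :=
        mul_mem hglast.1 (H_le_sdG ha _ hxH)
      have hnotH2 : w.getLast hwne * x ∉ H := fun hc =>
        hglast.2 (by
          have h3 := mul_mem hc (inv_mem hxH)
          simpa [mul_assoc] using h3)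
      obtain ⟨haw3, hprod3, hlen3⟩ := hw.mulLast hwne hmem2 hnotH2
      exact ⟨_, fun hc => List.cons_ne_nil _ _ (List.append_eq_nil_iff.mp hc).2, haw3, hprod3⟩
    · refine ⟨w ++ v, by simp [hwne], ?_, by simp⟩
      refine hw.append (hv2.congr' (by
        have := Nat.odd_iff.mp hodd
        omega))
  set γ : ℕ → List G := fun i => repBA bb αα i ++ [bb, ββ, bb] with hγ
  have hγaw : ∀ i, AW G₀ G₁ H (p + 1) (γ i) := by
    intro i
    refine (repBA_aw hbbG hbbH hαα.1 hαα.2 i).append ?_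
    rw [repBA_length]
    refine ⟨⟨?_, hbbH⟩, ⟨⟨?_, hββ.2⟩, ⟨⟨?_, hbbH⟩, trivial⟩⟩⟩
    · rw [sdG_congr (j' := p + 1) (by omega)]; exact hbbG
    · rw [sdG_congr (j' := p) (by omega)]; exact hββ.1
    · rw [sdG_congr (j' := p + 1) (by omega)]; exact hbbG
  have hγlen : ∀ i, (γ i).length = 2 * i + 3 := by
    intro i
    simp only [hγ, List.length_append, repBA_length, List.length_cons, List.length_nil]
  have hcore : ∀ i j : ℕ, i < j → ∀ e₁ ∈ E', ∀ e₂ ∈ E',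
      (γ i).prod * e₁ ≠ (γ j).prod * e₂ := by
    rintro i j hij e₁ ⟨v₁, hv₁ne, hv₁, rfl⟩ e₂ ⟨v₂, hv₂ne, hv₂, rfl⟩ heq
    have hWi : AW G₀ G₁ H (p + 1) (γ i ++ v₁) :=
      (hγaw i).append (hv₁.congr' (by rw [hγlen]; omega))
    have hWj : AW G₀ G₁ H (p + 1) (γ j ++ v₂) :=
      (hγaw j).append (hv₂.congr' (by rw [hγlen]; omega))
    have hprodeq : (γ i ++ v₁).prod = (γ j ++ v₂).prod := by
      simp only [List.prod_append]
      exact heq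
    obtain ⟨hlen, htake⟩ := key_prod_eq ha hWi hWj hprodeq
    have h2 := htake (2 * i + 2)
    -- compute the two takes
    have htakei : (γ i ++ v₁).take (2 * i + 2) = repBA bb αα i ++ [bb, ββ] := by
      have e1 : γ i ++ v₁ = (repBA bb αα i ++ [bb, ββ]) ++ ([bb] ++ v₁) := by
        simp [hγ, List.append_assoc]
      rw [e1]
      refine List.take_left' ?_
      simp only [List.length_append, repBA_length, List.length_cons, List.length_nil]
      all_goals omega
    obtain ⟨r, hr⟩ := repBA_prefix bb αα hij
    have htakej : (γ j ++ v₂).take (2 * i + 2) = repBA bb αα i ++ [bb, αα] := by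
      have e1 : γ j ++ v₂ = (repBA bb αα i ++ [bb, αα]) ++ ((r ++ [bb, ββ, bb]) ++ v₂) := by
        simp only [hγ, hr]
        simp [List.append_assoc]
      rw [e1]
      refine List.take_left' ?_
      simp only [List.length_append, repBA_length, List.length_cons, List.length_nil]
      all_goals omega
    rw [htakei, htakej] at h2
    have e2 : ((repBA bb αα i ++ [bb, ββ]).prod)⁻¹ * (repBA bb αα i ++ [bb, αα]).prod
        = ββ⁻¹ * αα := by
      simp only [List.prod_append, List.prod_cons, List.prod_nil, mul_one]
      group
    rw [e2] at h2
    exact hαβ (by simpa using inv_mem h2)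
  -- assemble
  refine ⟨(fun x => d * x) '' D', (fun x => d * x) '' E',
    fun i => d * (γ i).prod * d⁻¹, ?_, ?_, ?_, ?_⟩
  · ext x
    simp only [Set.mem_union, Set.mem_univ, iff_true]
    rcases hcover (d⁻¹ * x) with h | h
    · exact Or.inl ⟨d⁻¹ * x, h, by group⟩
    · exact Or.inr ⟨d⁻¹ * x, h, by group⟩
  · rw [Set.eq_empty_iff_forall_notMem]
    rintro x ⟨⟨z1, hz1, rfl⟩, z2, hz2, he⟩
    have : z2 = z1 := mul_left_cancel he
    subst this
    exact hdisjDE z2 hz1 hz2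
  · intro f hf
    rw [Set.eq_empty_iff_forall_notMem]
    rintro x ⟨⟨u, ⟨z1, hz1, rfl⟩, rfl⟩, z2, hz2, he⟩
    have hf' : AAx G₀ G₁ H p (d⁻¹ * f * d) := hd f hf
    have hz2e : z2 = (d⁻¹ * f * d) * z1 := by
      have h3 : d * z2 = f * (d * z1) := he
      have h4 := congrArg (fun w => d⁻¹ * w) h3
      simp only [← mul_assoc] at h4
      simpa [mul_assoc] using h4
    have : z2 ∈ E' := hz2e ▸ hmap _ z1 hf' hz1
    exact hdisjDE z2 hz2 this
  · intro i j _ _ _ _ hij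
    rw [Set.eq_empty_iff_forall_notMem]
    rintro x ⟨⟨u, ⟨z1, hz1, rfl⟩, rfl⟩, u2, ⟨z2, hz2, rfl⟩, he⟩
    -- he : (d γj d⁻¹) * (d * z2) = (d γi d⁻¹) * (d * z1)
    have h3 : (γ j).prod * z2 = (γ i).prod * z1 := by
      have h4 := congrArg (fun w => d⁻¹ * w) he
      simp only [mul_assoc] at h4
      simp only [inv_mul_cancel_left] at h4
      first
        | exact h4
        | exact mul_left_cancel h4
    rcases Nat.lt_or_ge i j with h5 | h5
    · exact hcore i j h5 z1 hz1 z2 hz2 h3.symm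
    · have h6 : j < i := by omega
      exact hcore j i h6 z2 hz2 z1 hz1 h3

/-! ### free semigroup property -/

theorem AAx_inv {p : ℕ} {x : G} (hx : AAx G₀ G₁ H p x) : AAx G₀ G₁ H p x⁻¹ := by
  obtain ⟨w, hne, hw, hodd, rfl⟩ := hx
  have hoddm := Nat.odd_iff.mp hodd
  refine ⟨AmalgamAux.revInv w, ?_, hw.revInv.congr' (by omega), ?_, revInv_prod w⟩
  · intro hc
    apply hne
    have := congrArg List.length hc
    rw [revInv_length] at this
    exact List.length_eq_zero_iff.mp this
  · rw [Nat.odd_iff, revInv_length]; omega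

theorem revInv_append (u v : List G) :
    AmalgamAux.revInv (u ++ v) = AmalgamAux.revInv v ++ AmalgamAux.revInv u := by
  simp [revInv]

theorem conj_prod (s : G) : ∀ (w : List G),
    (w.map (fun x => s⁻¹ * x * s)).prod = s⁻¹ * w.prod * s := by
  intro w
  induction w with
  | nil => simp
  | cons a t ih =>
    simp only [List.map_cons, List.prod_cons, ih]
    group

section FSG

variable {p : ℕ} {τ : List G} {bb γe : G}

/-- block word existence -/
theorem blockWord (ha : IsAmalgam G₀ G₁ H) (hτaw : AW G₀ G₁ H (p + 1) τ) (hτne : τ ≠ [])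
    (hτe : Even τ.length) (hbb : bb ∈ sdG G₀ G₁ (p + 1) ∧ bb ∉ H)
    (hγe : γe ∈ sdG G₀ G₁ p ∧ γe ∉ H)
    (hmerge : γe * (τ.getLast hτne)⁻¹ ∉ H) :
    ∀ l : List G,
      (∀ z ∈ l, z = 1 ∨ ∃ y, AAx G₀ G₁ H p y ∧ z = (τ.prod)⁻¹ * y * τ.prod) →
      ∃ W : List G, AW G₀ G₁ H (p + 1) W ∧ (W = [] ↔ l = []) ∧
        W.prod = (l.map (fun z => (((τ ++ [bb]) ++ [γe]).prod) * z)).prod := by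
  have hsm := Nat.even_iff.mp hτe
  have hl1 : 1 ≤ τ.length := by
    have : τ.length ≠ 0 := fun hc => hτne (List.length_eq_zero_iff.mp hc)
    omega
  have hglast := AW.getLast_mem hτne hτaw
  set ahat := τ.getLast hτne with hahat
  have hahatp : ahat ∈ sdG G₀ G₁ p := by
    have := hglast.1
    rwa [sdG_congr (j' := p) (by omega)] at this
  have hΓaw : AW G₀ G₁ H (p + 1) ((τ ++ [bb]) ++ [γe]) := by
    refine (hτaw.append ?_).append ?_
    · refine AW.single ?_ hbb.2
      rw [sdG_congr (j' := p + 1) (by omega)]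
      exact hbb.1
    · refine AW.single ?_ hγe.2
      rw [sdG_congr (j' := p) (by
        simp only [List.length_append, List.length_cons, List.length_nil]
        omega)]
      exact hγe.1
  have hΓlen : ((τ ++ [bb]) ++ [γe]).length = τ.length + 2 := by
    simp
  have hτsplit : τ.dropLast.prod * ahat = τ.prod := by
    conv_rhs => rw [← List.dropLast_append_getLast hτne]
    simp [hahat]
  have hdl : τ.dropLast.length = τ.length - 1 := List.length_dropLast
  intro l hl
  induction l with
  | nil => exact ⟨[], trivial, by simp, by simp⟩
  | cons z rest ih =>
    obtain ⟨W', hW'aw, hW'iff, hW'prod⟩ := ih (fun z' hz' => hl z' (by simp [hz']))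
    rcases hl z (by simp) with rfl | ⟨y, hy, rfl⟩
    · -- z = 1 : block is Γ itself
      refine ⟨((τ ++ [bb]) ++ [γe]) ++ W', ?_, ?_, ?_⟩
      · refine hΓaw.append (hW'aw.congr' ?_)
        rw [hΓlen]; omega
      · constructor
        · intro hc
          exfalso
          have := List.append_eq_nil_iff.mp hc
          simpa using (List.append_eq_nil_iff.mp this.1).2
        · intro hc; exact absurd hc (by simp)
      · simp only [List.prod_append, List.map_cons, List.prod_cons, hW'prod, mul_one]
    · -- z is sandwiched
      obtain ⟨w, hwne, hw, hodd, rfl⟩ := hy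
      have hoddm := Nat.odd_iff.mp hodd
      set B : List G := (τ ++ [bb]) ++
        ((γe * ahat⁻¹) :: (AmalgamAux.revInv τ.dropLast ++ (w ++ τ))) with hB
      have hBaw : AW G₀ G₁ H (p + 1) B := by
        refine (hτaw.append ?_).append ?_
        · refine AW.single ?_ hbb.2
          rw [sdG_congr (j' := p + 1) (by omega)]
          exact hbb.1
        · simp only [List.length_append, List.length_cons, List.length_nil]
          refine ⟨⟨?_, hmerge⟩, ?_⟩
          · rw [sdG_congr (j' := p) (by omega)]
            exact mul_mem hγe.1 (inv_mem hahatp)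
          · refine AW.append ((hτaw.dropLast.revInv).congr' (by omega)) ?_
            rw [revInv_length, hdl]
            refine AW.append (hw.congr' (by omega)) ?_
            exact hτaw.congr' (by omega)
      refine ⟨B ++ W', ?_, ?_, ?_⟩
      · refine hBaw.append (hW'aw.congr' ?_)
        simp only [hB, List.length_append, List.length_cons, revInv_length, hdl,
          List.length_nil]
        omega
      · constructor
        · intro hc
          exfalso
          have h2 := List.append_eq_nil_iff.mp hc
          have h3 := (List.append_eq_nil_iff.mp h2.1).1
          exact hτne (List.append_eq_nil_iff.mp h3).1
        · intro hc; exact absurd hc (by simp)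
      · simp only [hB, List.prod_append, List.prod_cons, List.map_cons, hW'prod,
          revInv_prod, List.prod_nil, mul_one]
        rw [show τ.prod = τ.dropLast.prod * ahat from hτsplit.symm]
        group

/-- the decoding theorem: products of blocks determine the list of letters -/
theorem decode (ha : IsAmalgam G₀ G₁ H) (hτaw : AW G₀ G₁ H (p + 1) τ) (hτne : τ ≠ [])
    (hτe : Even τ.length) (hbb : bb ∈ sdG G₀ G₁ (p + 1) ∧ bb ∉ H)
    (hγe : γe ∈ sdG G₀ G₁ p ∧ γe ∉ H)
    (hmerge : γe * (τ.getLast hτne)⁻¹ ∉ H) :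
    ∀ (l l' : List G),
      (∀ z ∈ l, z = 1 ∨ ∃ y, AAx G₀ G₁ H p y ∧ z = (τ.prod)⁻¹ * y * τ.prod) →
      (∀ z ∈ l', z = 1 ∨ ∃ y, AAx G₀ G₁ H p y ∧ z = (τ.prod)⁻¹ * y * τ.prod) →
      (∀ z ∈ l, ∀ z' ∈ l', z ≠ z' → AAx G₀ G₁ H p (z⁻¹ * z')) →
      (l.map (fun z => (((τ ++ [bb]) ++ [γe]).prod) * z)).prod
        = (l'.map (fun z => (((τ ++ [bb]) ++ [γe]).prod) * z)).prod →
      l = l' := by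
  have hne1 : ∀ (m : List G),
      (∀ z ∈ m, z = 1 ∨ ∃ y, AAx G₀ G₁ H p y ∧ z = (τ.prod)⁻¹ * y * τ.prod) →
      m ≠ [] → (m.map (fun z => (((τ ++ [bb]) ++ [γe]).prod) * z)).prod ∉ H := by
    intro m hm hmne
    obtain ⟨W, hWaw, hWiff, hWprod⟩ := blockWord ha hτaw hτne hτe hbb hγe hmerge m hm
    rw [← hWprod]
    exact prod_notin ha hWaw (fun hc => hmne (hWiff.mp hc))
  intro l
  induction l with
  | nil =>
    intro l' _ hl' _ heq
    rcases l' with _ | ⟨z', rest'⟩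
    · rfl
    · exfalso
      refine hne1 (z' :: rest') hl' (by simp) ?_
      rw [← heq]
      simpa using one_mem H
  | cons z rest ih =>
    intro l' hl hl' hrat heq
    rcases l' with _ | ⟨z', rest'⟩
    · exfalso
      refine hne1 (z :: rest) hl (by simp) ?_
      rw [heq]
      simpa using one_mem H
    · simp only [List.map_cons, List.prod_cons] at heq
      by_cases hzz : z = z'
      · subst hzz
        have h2 : (rest.map (fun z => (((τ ++ [bb]) ++ [γe]).prod) * z)).prod
            = (rest'.map (fun z => (((τ ++ [bb]) ++ [γe]).prod) * z)).prod :=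
          mul_left_cancel heq
        rw [ih rest' (fun a haa => hl a (by simp [haa]))
          (fun a haa => hl' a (by simp [haa]))
          (fun a haa b hb hab => hrat a (by simp [haa]) b (by simp [hb]) hab) h2]
      · exfalso
        have hδ : AAx G₀ G₁ H p (z⁻¹ * z') :=
          hrat z (by simp) z' (by simp) hzz
        obtain ⟨wδ, hwδne, hwδaw, hwδodd, hwδprod⟩ := hδ
        obtain ⟨Wr, hWraw, hWriff, hWrprod⟩ :=
          blockWord ha hτaw hτne hτe hbb hγe hmerge rest
            (fun a haa => hl a (by simp [haa]))
        obtain ⟨Wr', hWr'aw, hWr'iff, hWr'prod⟩ :=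
          blockWord ha hτaw hτne hτe hbb hγe hmerge rest'
            (fun a haa => hl' a (by simp [haa]))
        have hReq : Wr.prod = (z⁻¹ * z') * Wr'.prod := by
          rw [hWrprod, hWr'prod]
          have h3 := mul_left_cancel (a := ((τ ++ [bb]) ++ [γe]).prod * z)
            (b := (rest.map (fun a => (((τ ++ [bb]) ++ [γe]).prod) * a)).prod)
            (c := z⁻¹ * z' * (rest'.map (fun a => (((τ ++ [bb]) ++ [γe]).prod) * a)).prod)
            (by rw [heq]; group)
          exact h3
        have hoddm := Nat.odd_iff.mp hwδodd
        have hVaw : AW G₀ G₁ H p (wδ ++ Wr') := by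
          refine hwδaw.append (hWr'aw.congr' (by omega))
        have hVprod : (wδ ++ Wr').prod = Wr.prod := by
          rw [List.prod_append, hwδprod, hReq]
        rcases Nat.eq_zero_or_pos Wr.length with hWr0 | hWrpos
        · have hWrnil : Wr = [] := List.length_eq_zero_iff.mp hWr0
          refine prod_notin ha hVaw (by simp [hwδne]) ?_
          rw [hVprod, hWrnil]
          simpa using one_mem H
        · have hWrne : Wr ≠ [] := fun hc => by simp [hc] at hWrpos
          have hpar := parity_eq ha hVaw hWraw (by simp [hwδne])
            (by rw [hVprod]; simpa using one_mem H)
          omega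

end FSG

/-! ### (v) → (vi) -/

theorem exists_to_fsg (ha : IsAmalgam G₀ G₁ H) (hnd : Nondegenerate G₀ G₁ H)
    (hv : ∃ g : G, (H : Set G) ∩ {x | g⁻¹ * x * g ∈ H} = {1}) :
    HasFreeSemigroupProperty G := by
  classical
  obtain ⟨p, ⟨αα, ββ, hαα, hββ, hαβ⟩, ⟨bb, hbbG, hbbH⟩⟩ := bigSide ha hnd
  obtain ⟨τ, hτaw, hτne, hτeven, hτdet⟩ := detector ha ⟨hbbG, hbbH⟩ hαα hv
  intro F
  set F₃ : Finset G := ((F ∪ (F ×ˢ F).image (fun q => q.1⁻¹ * q.2)).erase 1) with hF₃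
  have h1F₃ : (1 : G) ∉ F₃ := Finset.notMem_erase _ _
  obtain ⟨d₂, hd₂⟩ :=
    simultaneous ha hτaw hτne hτeven hτdet hαα hββ hαβ ⟨hbbG, hbbH⟩ F₃ h1F₃
  set T := τ.prod with hT
  set s := d₂ * T with hs
  have hγech : ∃ c : G, (c ∈ sdG G₀ G₁ p ∧ c ∉ H) ∧ c * (τ.getLast hτne)⁻¹ ∉ H := by
    by_cases h1 : αα⁻¹ * (τ.getLast hτne)⁻¹ ∈ H
    · refine ⟨ββ⁻¹, ⟨inv_mem hββ.1, notin_H_inv hββ.2⟩, fun h2 => hαβ ?_⟩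
      have h3 := mul_mem h1 (inv_mem h2)
      have e : (αα⁻¹ * (τ.getLast hτne)⁻¹) * (ββ⁻¹ * (τ.getLast hτne)⁻¹)⁻¹
          = αα⁻¹ * ββ := by group
      rwa [e] at h3
    · exact ⟨αα⁻¹, ⟨inv_mem hαα.1, notin_H_inv hαα.2⟩, h1⟩
  obtain ⟨γe, hγe, hmerge⟩ := hγech
  set g₀ := ((τ ++ [bb]) ++ [γe]).prod with hg₀
  refine ⟨s * g₀ * s⁻¹, ?_⟩
  intro w₁ w₂ hw₁ne hw₂ne hw₁mem hw₂mem heq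
  set φ : G → G := fun x => s⁻¹ * ((s * g₀ * s⁻¹)⁻¹ * x) * s with hφ
  have hφval : ∀ f : G, φ ((s * g₀ * s⁻¹) * f) = s⁻¹ * f * s := by
    intro f
    simp only [hφ]
    group
  have hentryZ : ∀ x : G, x ∈ (fun f => (s * g₀ * s⁻¹) * f) '' (F : Set G) →
      φ x = 1 ∨ ∃ y, AAx G₀ G₁ H p y ∧ φ x = T⁻¹ * y * T := by
    rintro x ⟨f, hf, rfl⟩
    rw [hφval]
    by_cases hf1 : f = 1
    · subst hf1; left; simp
    · right
      have hf₃ : f ∈ F₃ := Finset.mem_erase.mpr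
        ⟨hf1, Finset.mem_union_left _ (by exact_mod_cast hf)⟩
      refine ⟨d₂⁻¹ * f * d₂, hd₂ f hf₃, ?_⟩
      rw [hs, hT]; group
  have hratio : ∀ x y : G, x ∈ (fun f => (s * g₀ * s⁻¹) * f) '' (F : Set G) →
      y ∈ (fun f => (s * g₀ * s⁻¹) * f) '' (F : Set G) →
      φ x ≠ φ y → AAx G₀ G₁ H p ((φ x)⁻¹ * (φ y)) := by
    rintro x y ⟨f, hf, rfl⟩ ⟨f', hf', rfl⟩ hneq
    simp only [hφval] at hneq ⊢
    have hff' : f ≠ f' := by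
      intro hc; exact hneq (by rw [hc])
    have hr : f⁻¹ * f' ∈ F₃ := by
      refine Finset.mem_erase.mpr ⟨?_, ?_⟩
      · intro hc
        exact hff' (by
          have := congrArg (fun u => f * u) hc
          simpa using this.symm)
      · refine Finset.mem_union_right _ ?_
        rw [Finset.mem_image]
        exact ⟨(f, f'), Finset.mem_product.mpr ⟨by exact_mod_cast hf, by exact_mod_cast hf'⟩, rfl⟩
    have h2 := hd₂ _ hr
    have h3 := gad_safe hτaw hτeven h2
    have e : (s⁻¹ * f * s)⁻¹ * (s⁻¹ * f' * s)
        = T⁻¹ * (d₂⁻¹ * (f⁻¹ * f') * d₂) * T := by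
      rw [hs]; group
    rw [e]
    exact h3
  have hdec := decode ha hτaw hτne hτeven ⟨hbbG, hbbH⟩ hγe hmerge
    (w₁.map φ) (w₂.map φ)
    (by
      intro z hz
      rw [List.mem_map] at hz
      obtain ⟨x, hx, rfl⟩ := hz
      exact hentryZ x (hw₁mem x hx))
    (by
      intro z hz
      rw [List.mem_map] at hz
      obtain ⟨x, hx, rfl⟩ := hz
      exact hentryZ x (hw₂mem x hx))
    (by
      intro z hz z' hz' hne
      rw [List.mem_map] at hz hz'
      obtain ⟨x, hx, rfl⟩ := hz
      obtain ⟨x', hx', rfl⟩ := hz'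
      exact hratio x x' (hw₁mem x hx) (hw₂mem x' hx') hne)
    (by
      have hcomp : ((fun z => g₀ * z) ∘ φ) = fun x => s⁻¹ * x * s := by
        funext x
        simp only [Function.comp, hφ]
        group
      rw [List.map_map, List.map_map, hcomp, conj_prod, conj_prod, heq])
  have hφinj : Function.Injective φ := by
    intro a b hab
    simp only [hφ] at hab
    have h1 := mul_right_cancel hab
    have h2 := mul_left_cancel h1
    exact mul_left_cancel h2
  exact List.map_injective_iff.mpr hφinj hdec

end AmalgamAux

/-- Let `G = G₀ *_H G₁` be a nondegenerate free product with amalgamation with `H` finite.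
Then the following are equivalent:
(i) `G` is icc; (ii) `ker G = {e}`; (iii) `K₀ = K₁ = {e}`; (iv) `G` is a Powers group;
(v) there exists `g ∈ G` with `H ∩ g H g⁻¹ = {e}`; (vi) `G` has the free semigroup
property. -/
theorem finite_amalgam_tfae {G : Type*} [Group G] (G₀ G₁ H : Subgroup G)
    (ha : IsAmalgam G₀ G₁ H) (hnd : Nondegenerate G₀ G₁ H)
    (hfin : (H : Set G).Finite) :
    List.TFAE
      [ IsIcc G,
        amalgamKerSet H = {1},
        KK G₀ G₁ H 0 = {1} ∧ KK G₀ G₁ H 1 = {1},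
        IsPowersGroup G,
        ∃ g : G, (H : Set G) ∩ {x | g⁻¹ * x * g ∈ H} = {1},
        HasFreeSemigroupProperty G ] := by
  tfae_have 1 → 2 := AmalgamAux.icc_to_ker hfin
  tfae_have 2 → 3 := AmalgamAux.ker_to_KK ha hnd hfin
  tfae_have 3 → 5 := AmalgamAux.KK_to_exists ha hfin
  tfae_have 5 → 4 := AmalgamAux.exists_to_powers ha hnd
  tfae_have 4 → 1 := AmalgamAux.powers_to_icc
  tfae_have 5 → 6 := AmalgamAux.exists_to_fsg ha hnd
  tfae_have 6 → 2 := AmalgamAux.fsg_to_ker hfin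
  tfae_finish
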